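/- arXiv:1806.06370 — 7 statements merged into one kernel-verified Lean document; each statement's English description precedes it below -/
import Mathlib

section
/- Let ψ : ℝ × [0,∞) → [0,∞) be a rate function such that for each a ≥ 0 the map x ↦ ψ(x,a) is continuous and strictly increasing, for each x the map z ↦ ψ(x,z) is measurable and locally integrable on [0,∞), and for every x the integral G(x) := ∫_0^∞ exp(−∫_0^a ψ(x,z) dz) da is finite. Let b < 0, ν > 0 and n ∈ ℕ. Then there exists a unique λ* > 0 solving the fixed point equation 1/λ* = ∫_0^∞ exp(−∫_0^a ψ((b/ν^{n+1})·λ*, z) dz) da. -/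
open MeasureTheory Real

/-- For a rate function ψ(x,a), continuous and strictly increasing in x,
measurable and locally integrable in a, with finite integral
G(x) = ∫_0^∞ exp(−∫_0^a ψ(x,z) dz) da for every x, and for b < 0, ν > 0, n ∈ ℕ,
there exists a unique λ* > 0 solving
1/λ* = ∫_0^∞ exp(−∫_0^a ψ((b/ν^{n+1})·λ*, z) dz) da. -/
theorem stmt0 (ψ : ℝ → ℝ → ℝ)
    (hψ_nonneg : ∀ x a, 0 ≤ a → 0 ≤ ψ x a)
    (hψ_cont : ∀ a, 0 ≤ a → Continuous fun x => ψ x a)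
    (hψ_mono : ∀ a, 0 ≤ a → StrictMono fun x => ψ x a)
    (hψ_meas : ∀ x, Measurable (ψ x))
    (hψ_locint : ∀ x T, 0 ≤ T → IntegrableOn (ψ x) (Set.Icc 0 T))
    (hG_fin : ∀ x, IntegrableOn
        (fun a => Real.exp (-∫ z in (0:ℝ)..a, ψ x z)) (Set.Ioi 0))
    (b ν : ℝ) (hb : b < 0) (hν : 0 < ν) (n : ℕ) :
    ∃! lam : ℝ, 0 < lam ∧
      1 / lam = ∫ a in Set.Ioi (0:ℝ),
        Real.exp (-∫ z in (0:ℝ)..a, ψ (b / ν ^ (n + 1) * lam) z) := by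
  set c : ℝ := b / ν ^ (n + 1) with hc_def
  have hc : c < 0 := div_neg_of_neg_of_pos hb (pow_pos hν _)
  set G : ℝ → ℝ := fun x => ∫ a in Set.Ioi (0:ℝ),
      Real.exp (-∫ z in (0:ℝ)..a, ψ x z) with hG_def
  -- interval integrability of ψ x on [0,a]
  have hII : ∀ x a, 0 ≤ a → IntervalIntegrable (ψ x) volume 0 a := by
    intro x a ha
    rw [intervalIntegrable_iff_integrableOn_Ioc_of_le ha]
    exact (hψ_locint x a ha).mono_set Set.Ioc_subset_Icc_self
  -- monotonicity of the primitive in x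
  have hImono : ∀ x y a, x ≤ y → 0 ≤ a →
      (∫ z in (0:ℝ)..a, ψ x z) ≤ ∫ z in (0:ℝ)..a, ψ y z := by
    intro x y a hxy ha
    refine intervalIntegral.integral_mono_on ha (hII x a ha) (hII y a ha) ?_
    intro z hz
    exact ((hψ_mono z hz.1).monotone hxy : ψ x z ≤ ψ y z)
  -- G is antitone
  have hGanti : ∀ x y, x ≤ y → G y ≤ G x := by
    intro x y hxy
    refine setIntegral_mono_on (hG_fin y) (hG_fin x) measurableSet_Ioi ?_
    intro a ha
    exact Real.exp_le_exp.mpr (neg_le_neg (hImono x y a hxy (le_of_lt ha)))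
  -- G is positive
  have hGpos : ∀ x, 0 < G x := by
    intro x
    rw [hG_def, setIntegral_pos_iff_support_of_nonneg_ae
      (Filter.Eventually.of_forall fun a => (Real.exp_pos _).le) (hG_fin x)]
    have : (Function.support fun a => Real.exp (-∫ z in (0:ℝ)..a, ψ x z)) = Set.univ := by
      ext a; simp [Function.mem_support, (Real.exp_pos _).ne']
    rw [this, Set.univ_inter]
    simp
  -- continuity of the primitive in x
  have hIcont : ∀ a : ℝ, 0 < a → ∀ x₀ : ℝ,
      ContinuousAt (fun x => ∫ z in (0:ℝ)..a, ψ x z) x₀ := by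
    intro a ha x₀
    have hmem : Set.Icc (x₀ - 1) (x₀ + 1) ∈ nhds x₀ :=
      Icc_mem_nhds (by linarith) (by linarith)
    refine intervalIntegral.continuousAt_of_dominated_interval
      (bound := ψ (x₀ + 1)) ?_ ?_ (hII (x₀ + 1) a ha.le) ?_
    · exact Filter.Eventually.of_forall fun x => (hψ_meas x).aestronglyMeasurable
    · refine Filter.eventually_of_mem hmem fun x hx => ?_
      refine Filter.Eventually.of_forall fun t ht => ?_
      rw [Set.uIoc_of_le ha.le] at ht
      rw [Real.norm_of_nonneg (hψ_nonneg x t ht.1.le)]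
      exact ((hψ_mono t ht.1.le).monotone hx.2 : ψ x t ≤ ψ (x₀ + 1) t)
    · refine Filter.Eventually.of_forall fun t ht => ?_
      rw [Set.uIoc_of_le ha.le] at ht
      exact (hψ_cont t ht.1.le).continuousAt
  -- continuity of G
  have hGcont : Continuous G := by
    rw [continuous_iff_continuousAt]
    intro x₀
    have hmem : Set.Icc (x₀ - 1) (x₀ + 1) ∈ nhds x₀ :=
      Icc_mem_nhds (by linarith) (by linarith)
    refine continuousAt_of_dominated
      (bound := fun a => Real.exp (-∫ z in (0:ℝ)..a, ψ (x₀ - 1) z)) ?_ ?_ (hG_fin (x₀ - 1)) ?_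
    · exact Filter.Eventually.of_forall fun x => (hG_fin x).aestronglyMeasurable
    · refine Filter.eventually_of_mem hmem fun x hx => ?_
      refine (ae_restrict_iff' measurableSet_Ioi).mpr
        (Filter.Eventually.of_forall fun a ha => ?_)
      rw [Real.norm_of_nonneg (Real.exp_pos _).le]
      exact Real.exp_le_exp.mpr (neg_le_neg (hImono (x₀ - 1) x a hx.1 (le_of_lt ha)))
    · refine (ae_restrict_iff' measurableSet_Ioi).mpr
        (Filter.Eventually.of_forall fun a ha => ?_)
      exact (Real.continuous_exp.continuousAt).comp ((hIcont a ha x₀).neg)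
  -- the function φ
  set φ : ℝ → ℝ := fun lam => 1 / lam - G (c * lam) with hφ_def
  have hφcont : ContinuousOn φ (Set.Ioi 0) := by
    intro lam hlam
    refine ContinuousWithinAt.sub ?_ ?_
    · exact ((continuousAt_const.div continuousAt_id ((Set.mem_Ioi.mp hlam).ne'))).continuousWithinAt
    · exact (hGcont.continuousAt.comp
        ((continuous_const.mul continuous_id).continuousAt)).continuousWithinAt
  -- endpoints
  obtain ⟨lam₀, hlam₀pos, hlam₀le, hφ₀⟩ :
      ∃ lam₀ : ℝ, 0 < lam₀ ∧ lam₀ ≤ 1 ∧ 0 < φ lam₀ := by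
    refine ⟨min 1 (1 / (2 * G c)), ?_, min_le_left _ _, ?_⟩
    · exact lt_min one_pos (by have := hGpos c; positivity)
    · have h1 : c * min 1 (1 / (2 * G c)) ≥ c := by
        nlinarith [min_le_left (1:ℝ) (1 / (2 * G c)), lt_min one_pos (by have := hGpos c; positivity : (0:ℝ) < 1 / (2 * G c)), hGpos c]
      have h2 : G (c * min 1 (1 / (2 * G c))) ≤ G c := hGanti _ _ h1
      have h3 : 1 / min 1 (1 / (2 * G c)) ≥ 2 * G c := by
        rw [ge_iff_le, le_div_iff₀ (lt_min one_pos (by have := hGpos c; positivity))]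
        calc 2 * G c * min 1 (1 / (2 * G c)) ≤ 2 * G c * (1 / (2 * G c)) := by
              have := hGpos c
              nlinarith [min_le_right (1:ℝ) (1 / (2 * G c))]
          _ = 1 := by have h := (hGpos c).ne'; field_simp
      have := hGpos c
      simp only [hφ_def]
      linarith
  obtain ⟨lam₁, hlam₁pos, hlam₁ge, hφ₁⟩ :
      ∃ lam₁ : ℝ, 0 < lam₁ ∧ 1 ≤ lam₁ ∧ φ lam₁ < 0 := by
    refine ⟨max 1 (2 / G c), ?_, le_max_left _ _, ?_⟩
    · exact lt_of_lt_of_le one_pos (le_max_left _ _)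
    · have hmaxpos : (0:ℝ) < max 1 (2 / G c) := lt_of_lt_of_le one_pos (le_max_left _ _)
      have h1 : c * max 1 (2 / G c) ≤ c := by
        nlinarith [le_max_left (1:ℝ) (2 / G c)]
      have h2 : G c ≤ G (c * max 1 (2 / G c)) := hGanti _ _ h1
      have h3 : 1 / max 1 (2 / G c) ≤ G c / 2 := by
        rw [div_le_div_iff₀ hmaxpos two_pos]
        calc (1:ℝ) * 2 = G c * (2 / G c) := by have h := (hGpos c).ne'; field_simp
          _ ≤ G c * max 1 (2 / G c) := by
              have := hGpos c
              nlinarith [le_max_right (1:ℝ) (2 / G c)]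
      have := hGpos c
      simp only [hφ_def]
      linarith
  have hle : lam₀ ≤ lam₁ := hlam₀le.trans hlam₁ge
  -- IVT
  obtain ⟨lam, hlam_mem, hlam_eq⟩ : ∃ lam ∈ Set.Icc lam₀ lam₁, φ lam = 0 := by
    have hsub : Set.Icc lam₀ lam₁ ⊆ Set.Ioi 0 := fun t ht => lt_of_lt_of_le hlam₀pos ht.1
    have := intermediate_value_Icc' hle (hφcont.mono hsub)
    have h0 : (0:ℝ) ∈ Set.Icc (φ lam₁) (φ lam₀) := ⟨hφ₁.le, hφ₀.le⟩
    obtain ⟨lam, hmem, heq⟩ := this h0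
    exact ⟨lam, hmem, heq⟩
  have hlampos : 0 < lam := lt_of_lt_of_le hlam₀pos hlam_mem.1
  refine ⟨lam, ⟨hlampos, ?_⟩, ?_⟩
  · have : 1 / lam = G (c * lam) := by
      have := hlam_eq; simp only [hφ_def] at this; linarith
    simpa [hG_def] using this
  · rintro y ⟨hypos, hyeq⟩
    have hyG : 1 / y = G (c * y) := hyeq
    have hlamG : 1 / lam = G (c * lam) := by
      have := hlam_eq; simp only [hφ_def] at this; linarith
    by_contra hne
    rcases lt_or_gt_of_ne hne with h | h
    · -- y < lam
      have h1 : 1 / lam < 1 / y := one_div_lt_one_div_of_lt hypos h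
      have h2 : c * lam ≤ c * y := by nlinarith
      have h3 : G (c * y) ≤ G (c * lam) := hGanti _ _ h2
      linarith
    · have h1 : 1 / y < 1 / lam := one_div_lt_one_div_of_lt hlampos h
      have h2 : c * y ≤ c * lam := by nlinarith
      have h3 : G (c * lam) ≤ G (c * y) := hGanti _ _ h2
      linarith
end

section
/- Let f : ℝ → ℝ be continuous, nondecreasing, and bounded below by a constant m > 0, let H < 0 and δ > 0. Then there exists exactly one λ > 0 satisfying 1/λ = δ + 1/f(λ H). -/
open MeasureTheory Real

/-- For f continuous, nondecreasing, bounded below by m > 0, H < 0 and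
δ > 0, there is exactly one λ > 0 satisfying 1/λ = δ + 1/f(λH). -/
theorem stmt2 (f : ℝ → ℝ) (hf_cont : Continuous f) (hf_mono : Monotone f)
    (m : ℝ) (hm : 0 < m) (hf_lb : ∀ x, m ≤ f x)
    (H : ℝ) (hH : H < 0) (δ : ℝ) (hδ : 0 < δ) :
    ∃! lam : ℝ, 0 < lam ∧ 1 / lam = δ + 1 / f (lam * H) := by
  have hfpos : ∀ x, 0 < f x := fun x => lt_of_lt_of_le hm (hf_lb x)
  set D : ℝ → ℝ := fun l => δ + 1 / f (l * H) with hD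
  have hDpos : ∀ l, 0 < D l := fun l => by
    have := hfpos (l * H)
    have : 0 < 1 / f (l * H) := by positivity
    simp only [hD]; linarith
  set F : ℝ → ℝ := fun l => l - 1 / D l with hF
  -- F is strictly monotone
  have hPhi_anti : ∀ a b : ℝ, a ≤ b → 1 / D b ≤ 1 / D a := by
    intro a b hab
    apply one_div_le_one_div_of_le (hDpos a)
    have h1 : b * H ≤ a * H := by nlinarith
    have h2 : f (b * H) ≤ f (a * H) := hf_mono h1
    have := hfpos (b * H)
    have := hfpos (a * H)
    have : 1 / f (a * H) ≤ 1 / f (b * H) :=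
      one_div_le_one_div_of_le (hfpos (b * H)) h2
    simp only [hD]; linarith
  have hFmono : StrictMono F := by
    intro a b hab
    have := hPhi_anti a b hab.le
    simp only [hF]; linarith
  -- F is continuous
  have hFcont : Continuous F := by
    apply continuous_id.sub
    apply Continuous.div continuous_const
    · exact continuous_const.add (continuous_const.div
        (hf_cont.comp (continuous_id.mul continuous_const))
        (fun l => (hfpos (l * H)).ne'))
    · exact fun l => (hDpos l).ne'
  -- F 0 < 0 < F (1/δ)
  have hF0 : F 0 < 0 := by
    have := hDpos 0
    have : 0 < 1 / D 0 := by positivity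
    simp only [hF]; linarith
  have hF1 : 0 < F (1 / δ) := by
    have hfp := hfpos ((1 / δ) * H)
    have h1 : 0 < 1 / f ((1 / δ) * H) := by positivity
    have h2 : δ < D (1 / δ) := by simp only [hD]; linarith
    have h3 : 1 / D (1 / δ) < 1 / δ := one_div_lt_one_div_of_lt hδ h2
    simp only [hF]; linarith
  obtain ⟨lam, hlammem, hlamroot⟩ :=
    intermediate_value_Icc (le_of_lt (by positivity : (0:ℝ) < 1 / δ))
      hFcont.continuousOn ⟨hF0.le, hF1.le⟩
  have hlameq : lam = 1 / D lam := by
    have : lam - 1 / D lam = 0 := hlamroot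
    linarith
  have hlampos : 0 < lam := by
    rw [hlameq]; exact one_div_pos.mpr (hDpos lam)
  refine ⟨lam, ⟨hlampos, ?_⟩, ?_⟩
  · nth_rewrite 1 [hlameq]
    rw [one_div_one_div]
  · rintro y ⟨hy, hyeq⟩
    have hFy : F y = 0 := by
      have : 1 / (1 / y) = 1 / D y := by rw [hyeq]
      rw [one_div_one_div] at this
      simp only [hF]; linarith
    exact hFmono.injective (by rw [hFy, hlamroot])
end

section
/- Let δ > 0, let φ : [0,∞) → [0,∞) be continuous, let μ be a finite measure on [0,∞), and let p : [0,∞) → ℝ be locally bounded and measurable, satisfying the renewal equation p(t) = ∫_{[0,∞)} 1{a ≥ δ − t} exp(−∫_{max(δ−a,0)}^t φ(s) ds) dμ(a) + ∫_0^{max(t−δ,0)} φ(s) p(s) exp(−∫_{s+δ}^t φ(u) du) ds for all t ≥ 0. Then p is continuous on (δ, ∞) and continuously differentiable on (2δ, ∞), where it solves the delay differential equation p'(t) = −φ(t) p(t) + φ(t−δ) p(t−δ) for all t > 2δ. -/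
open MeasureTheory Real

/-- Any locally bounded measurable solution p of the renewal equation
p(t) = ∫ 1{a ≥ δ−t} exp(−∫_{max(δ−a,0)}^t φ(s) ds) dμ(a)
       + ∫_0^{max(t−δ,0)} φ(s) p(s) exp(−∫_{s+δ}^t φ(u) du) ds
is continuous on (δ,∞) and continuously differentiable on (2δ,∞), where it solves the
delay differential equation p'(t) = −φ(t)p(t) + φ(t−δ)p(t−δ). -/
theorem stmt3 (δ : ℝ) (hδ : 0 < δ) (φ : ℝ → ℝ) (hφ_cont : Continuous φ)
    (hφ_nonneg : ∀ t, 0 ≤ t → 0 ≤ φ t)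
    (μ : Measure ℝ) [IsFiniteMeasure μ] (hμ : μ (Set.Iio 0) = 0)
    (p : ℝ → ℝ) (hp_meas : Measurable p)
    (hp_loc : ∀ T, 0 ≤ T → ∃ C, ∀ t ∈ Set.Icc (0:ℝ) T, |p t| ≤ C)
    (hren : ∀ t, 0 ≤ t →
      p t = (∫ a, (if δ - t ≤ a then
                Real.exp (-∫ s in (max (δ - a) 0)..t, φ s) else 0) ∂μ)
          + ∫ s in (0:ℝ)..(max (t - δ) 0),
              φ s * p s * Real.exp (-∫ u in (s + δ)..t, φ u)) :
    ContinuousOn p (Set.Ioi δ) ∧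
    (∀ t, 2 * δ < t →
      HasDerivAt p (-(φ t) * p t + φ (t - δ) * p (t - δ)) t) ∧
    ContinuousOn (deriv p) (Set.Ioi (2 * δ)) := by
  set F : ℝ → ℝ := fun t => ∫ s in (0:ℝ)..t, φ s with hF
  have hφint : ∀ a b : ℝ, IntervalIntegrable φ volume a b := fun a b =>
    hφ_cont.intervalIntegrable a b
  have hFcont : Continuous F := intervalIntegral.continuous_primitive hφint 0
  have hFderiv : ∀ t, HasDerivAt F (φ t) t := fun t =>
    intervalIntegral.integral_hasDerivAt_right (hφint 0 t)
      (hφ_cont.stronglyMeasurableAtFilter _ _) hφ_cont.continuousAt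
  have hsub : ∀ c t : ℝ, (∫ s in c..t, φ s) = F t - F c := fun c t =>
    (intervalIntegral.integral_interval_sub_left (hφint 0 t) (hφint 0 c)).symm
  set M : ℝ := ∫ a, Real.exp (F (max (δ - a) 0)) ∂μ with hM
  set h : ℝ → ℝ := fun s => φ s * p s * Real.exp (F (s + δ)) with hh
  have hae : ∀ᵐ a ∂μ, 0 ≤ a := by
    rw [ae_iff]
    convert hμ using 2
    ext a; simp [not_le, Set.mem_Iio]
  -- key identity
  have key : ∀ t, δ ≤ t →
      p t = Real.exp (-F t) * (M + ∫ s in (0:ℝ)..(t - δ), h s) := by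
    intro t ht
    rw [hren t (le_trans hδ.le ht)]
    have h1 : (∫ a, (if δ - t ≤ a then
          Real.exp (-∫ s in (max (δ - a) 0)..t, φ s) else 0) ∂μ)
        = Real.exp (-F t) * M := by
      rw [hM, ← integral_const_mul]
      refine integral_congr_ae (hae.mono fun a ha => ?_)
      simp only [if_pos (le_trans (show δ - t ≤ 0 by linarith) ha)]
      rw [hsub, show -(F t - F (max (δ - a) 0)) = -F t + F (max (δ - a) 0) by ring,
        Real.exp_add]
    have h2 : (∫ s in (0:ℝ)..(max (t - δ) 0),
          φ s * p s * Real.exp (-∫ u in (s + δ)..t, φ u))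
        = Real.exp (-F t) * ∫ s in (0:ℝ)..(t - δ), h s := by
      rw [max_eq_left (by linarith), ← intervalIntegral.integral_const_mul]
      refine intervalIntegral.integral_congr fun s _ => ?_
      rw [hsub, hh]
      simp only []
      rw [show -(F t - F (s + δ)) = F (s + δ) + -F t by ring, Real.exp_add]
      ring
    rw [h1, h2]; ring
  -- interval integrability of h
  have hhmeas : Measurable h := by
    apply (hφ_cont.measurable.mul hp_meas).mul
    exact (Real.continuous_exp.comp (hFcont.comp (continuous_id.add continuous_const))).measurable
  have hint : ∀ x : ℝ, 0 ≤ x → IntervalIntegrable h volume 0 x := by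
    intro x hx
    rw [intervalIntegrable_iff_integrableOn_Icc_of_le hx]
    obtain ⟨C, hC⟩ := hp_loc x hx
    obtain ⟨C1, hC1⟩ := isCompact_Icc.exists_bound_of_continuousOn
      (hφ_cont.continuousOn (s := Set.Icc 0 x))
    have hexp_cont : Continuous fun s : ℝ => Real.exp (F (s + δ)) :=
      Real.continuous_exp.comp (hFcont.comp (continuous_id.add continuous_const))
    obtain ⟨C2, hC2⟩ := isCompact_Icc.exists_bound_of_continuousOn
      (hexp_cont.continuousOn (s := Set.Icc 0 x))
    have hC0 : 0 ≤ C := le_trans (abs_nonneg _) (hC 0 ⟨le_refl _, hx⟩)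
    have hC10 : 0 ≤ C1 := le_trans (norm_nonneg _) (hC1 0 ⟨le_refl _, hx⟩)
    have hC20 : 0 ≤ C2 := le_trans (norm_nonneg _) (hC2 0 ⟨le_refl _, hx⟩)
    refine Integrable.mono' (g := fun _ => C1 * C * C2)
      (integrable_const _) (hhmeas.aestronglyMeasurable.restrict) ?_
    rw [ae_restrict_iff' measurableSet_Icc]
    refine Filter.Eventually.of_forall fun s hs => ?_
    have : ‖h s‖ = ‖φ s‖ * ‖p s‖ * ‖Real.exp (F (s + δ))‖ := by
      rw [hh]; simp [abs_mul]
    rw [this]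
    have e1 : ‖φ s‖ ≤ C1 := hC1 s hs
    have e2 : ‖p s‖ ≤ C := by rw [Real.norm_eq_abs]; exact hC s hs
    have e3 : ‖Real.exp (F (s + δ))‖ ≤ C2 := hC2 s hs
    exact mul_le_mul (mul_le_mul e1 e2 (norm_nonneg _) hC10) e3 (norm_nonneg _)
      (mul_nonneg hC10 hC0)
  -- continuity of the primitive at positive points
  have hprim_cont : ∀ x0 : ℝ, 0 < x0 →
      ContinuousAt (fun x => ∫ s in (0:ℝ)..x, h s) x0 := by
    intro x0 hx0
    have hI : Set.uIcc (0:ℝ) (x0 + 1) = Set.Icc 0 (x0 + 1) :=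
      Set.uIcc_of_le (by linarith)
    have hIint : IntegrableOn h (Set.uIcc (0:ℝ) (x0 + 1)) volume := by
      rw [hI]
      exact (intervalIntegrable_iff_integrableOn_Icc_of_le (by linarith)).mp
        (hint (x0 + 1) (by linarith))
    have := intervalIntegral.continuousOn_primitive_interval hIint
    rw [hI] at this
    exact this.continuousAt (Icc_mem_nhds (by linarith) (by linarith))
  -- continuity of p on (δ, ∞)
  have hpcont : ContinuousOn p (Set.Ioi δ) := by
    intro t ht
    have hmem : Set.Ioi δ ∈ nhds t := Ioi_mem_nhds ht
    have heq : (fun u => Real.exp (-F u) * (M + ∫ s in (0:ℝ)..(u - δ), h s))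
        =ᶠ[nhds t] p := by
      filter_upwards [hmem] with u hu
      exact (key u (le_of_lt hu)).symm
    have hca : ContinuousAt
        (fun u => Real.exp (-F u) * (M + ∫ s in (0:ℝ)..(u - δ), h s)) t := by
      have hc1 : ContinuousAt (fun u : ℝ => u - δ) t :=
        (continuous_id.sub continuous_const).continuousAt
      have hc2 : ContinuousAt (fun x => ∫ s in (0:ℝ)..x, h s) (t - δ) :=
        hprim_cont (t - δ) (by simp only [Set.mem_Ioi] at ht; linarith)
      have hc3 : ContinuousAt ((fun x => ∫ s in (0:ℝ)..x, h s) ∘ (fun u : ℝ => u - δ)) t :=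
        ContinuousAt.comp (f := fun u : ℝ => u - δ) (x := t) hc2 hc1
      exact ContinuousAt.mul (Real.continuous_exp.comp hFcont.neg).continuousAt
        (ContinuousAt.add continuousAt_const hc3)
    exact (hca.congr heq).continuousWithinAt
  refine ⟨hpcont, ?_⟩
  have hderiv : ∀ t, 2 * δ < t →
      HasDerivAt p (-(φ t) * p t + φ (t - δ) * p (t - δ)) t := by
    intro t ht
    have htδ : δ < t - δ := by linarith
    have hcont_h : ContinuousAt h (t - δ) := by
      refine ContinuousAt.mul (ContinuousAt.mul hφ_cont.continuousAt ?_) ?_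
      · exact hpcont.continuousAt (Ioi_mem_nhds htδ)
      · exact (Real.continuous_exp.comp
          (hFcont.comp (continuous_id.add continuous_const))).continuousAt
    have hG0 : HasDerivAt (fun x => ∫ s in (0:ℝ)..x, h s) (h (t - δ)) (t - δ) :=
      intervalIntegral.integral_hasDerivAt_right (hint (t - δ) (by linarith))
        (hhmeas.stronglyMeasurable.stronglyMeasurableAtFilter) hcont_h
    have hsubId : HasDerivAt (fun u : ℝ => u - δ) 1 t := (hasDerivAt_id t).sub_const δ
    have hG : HasDerivAt (fun u => ∫ s in (0:ℝ)..(u - δ), h s) (h (t - δ)) t := by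
      have := HasDerivAt.comp t hG0 hsubId
      rw [mul_one] at this; exact this
    have hE : HasDerivAt (fun u => Real.exp (-F u)) (Real.exp (-F t) * (-φ t)) t :=
      (hFderiv t).neg.exp
    have hprod : HasDerivAt
        (fun u => Real.exp (-F u) * (M + ∫ s in (0:ℝ)..(u - δ), h s))
        (Real.exp (-F t) * (-φ t) * (M + ∫ s in (0:ℝ)..(t - δ), h s)
          + Real.exp (-F t) * h (t - δ)) t :=
      hE.mul (hG.const_add M)
    have heq : p =ᶠ[nhds t]
        (fun u => Real.exp (-F u) * (M + ∫ s in (0:ℝ)..(u - δ), h s)) := by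
      filter_upwards [Ioi_mem_nhds (show δ < t by linarith)] with u hu
      exact key u (le_of_lt hu)
    have hP : HasDerivAt p
        (Real.exp (-F t) * (-φ t) * (M + ∫ s in (0:ℝ)..(t - δ), h s)
          + Real.exp (-F t) * h (t - δ)) t := hprod.congr_of_eventuallyEq heq
    have hval : Real.exp (-F t) * (-φ t) * (M + ∫ s in (0:ℝ)..(t - δ), h s)
          + Real.exp (-F t) * h (t - δ)
        = -(φ t) * p t + φ (t - δ) * p (t - δ) := by
      rw [key t (by linarith), hh]
      simp only [show t - δ + δ = t by ring]
      have hexp : Real.exp (-F t) * Real.exp (F t) = 1 := by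
        rw [← Real.exp_add]; simp
      linear_combination (φ (t - δ) * p (t - δ)) * hexp
    rw [← hval]
    exact hP
  refine ⟨hderiv, ?_⟩
  have heqon : Set.EqOn (deriv p)
      (fun t => -(φ t) * p t + φ (t - δ) * p (t - δ)) (Set.Ioi (2 * δ)) :=
    fun t ht => (hderiv t ht).deriv
  refine ContinuousOn.congr ?_ heqon
  have hsubset : Set.Ioi (2 * δ) ⊆ Set.Ioi δ := fun x hx => by
    simp only [Set.mem_Ioi] at *; linarith
  have hmaps : Set.MapsTo (fun t => t - δ) (Set.Ioi (2 * δ)) (Set.Ioi δ) :=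
    fun x hx => by simp only [Set.mem_Ioi] at *; linarith
  refine ContinuousOn.add ?_ ?_
  · exact (hφ_cont.continuousOn.neg).mul (hpcont.mono hsubset)
  · exact ((hφ_cont.comp (continuous_id.sub continuous_const)).continuousOn).mul
      (hpcont.comp (continuous_id.sub continuous_const).continuousOn hmaps)
end

section
/- Let δ > 0, let φ : [0,∞) → [0,∞) be continuous, let μ be a finite measure on [0,∞) having a continuous nonnegative density π₀ with respect to Lebesgue measure, and let p : [0,∞) → ℝ be locally bounded and measurable, satisfying the renewal equation p(t) = ∫_{[0,∞)} 1{a ≥ δ − t} exp(−∫_{max(δ−a,0)}^t φ(s) ds) dμ(a) + ∫_0^{max(t−δ,0)} φ(s) p(s) exp(−∫_{s+δ}^t φ(u) du) ds for all t ≥ 0. Then p is continuous on all of [0,∞); it is continuously differentiable on (0,δ) with p'(t) = π₀(δ−t) − φ(t) p(t) there; it is continuously differentiable on (δ,∞) with p'(t) = −φ(t) p(t) + φ(t−δ) p(t−δ) there; and at t = δ the one-sided derivatives are p'(δ−) = π₀(0) − φ(δ) p(δ) and p'(δ+) = −φ(δ) p(δ) + φ(0) p(0). -/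
open MeasureTheory Real

noncomputable def Phi (φ : ℝ → ℝ) (t : ℝ) : ℝ := ∫ s in (0:ℝ)..t, φ s

lemma Phi_sub (φ : ℝ → ℝ) (hφ : Continuous φ) (a b : ℝ) :
    (∫ s in a..b, φ s) = Phi φ b - Phi φ a :=
  (intervalIntegral.integral_interval_sub_left (hφ.intervalIntegrable _ _)
    (hφ.intervalIntegrable _ _)).symm

lemma Phi_hasDerivAt (φ : ℝ → ℝ) (hφ : Continuous φ) (t : ℝ) :
    HasDerivAt (Phi φ) (φ t) t :=
  intervalIntegral.integral_hasDerivAt_right (hφ.intervalIntegrable _ _)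
    (hφ.stronglyMeasurable.stronglyMeasurableAtFilter) hφ.continuousAt

lemma Phi_cont (φ : ℝ → ℝ) (hφ : Continuous φ) : Continuous (Phi φ) :=
  continuous_iff_continuousAt.mpr fun x => (Phi_hasDerivAt φ hφ x).continuousAt

noncomputable def gfun (δ : ℝ) (φ p : ℝ → ℝ) (s : ℝ) : ℝ :=
  if 0 ≤ s then φ s * p s * Real.exp (Phi φ (s + δ)) else 0

noncomputable def Hfun (δ : ℝ) (φ p : ℝ → ℝ) (x : ℝ) : ℝ := ∫ s in (0:ℝ)..x, gfun δ φ p s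

noncomputable def Nfun (δ : ℝ) (φ π₀ : ℝ → ℝ) (x : ℝ) : ℝ :=
  (∫ a in Set.Ici δ, π₀ a) + ∫ u in (0:ℝ)..x, Real.exp (Phi φ u) * π₀ (δ - u)

lemma dens (π₀ : ℝ → ℝ) (hπ₀_cont : Continuous π₀) (hπ₀_nonneg : ∀ a, 0 ≤ π₀ a)
    (f : ℝ → ℝ) :
    (∫ a, f a ∂((volume.restrict (Set.Ici 0)).withDensity
        (fun a => ENNReal.ofReal (π₀ a)))) = ∫ a in Set.Ici (0:ℝ), π₀ a * f a := by
  have hm : Measurable (fun a => (π₀ a).toNNReal) :=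
    continuous_real_toNNReal.comp hπ₀_cont |>.measurable
  have : (fun a => ENNReal.ofReal (π₀ a)) = (fun a => ((π₀ a).toNNReal : ENNReal)) := rfl
  rw [this, integral_withDensity_eq_integral_smul hm]
  congr 1; funext a
  rw [NNReal.smul_def, Real.coe_toNNReal _ (hπ₀_nonneg a), smul_eq_mul]

lemma pint (π₀ : ℝ → ℝ) (hπ₀_cont : Continuous π₀) (hπ₀_nonneg : ∀ a, 0 ≤ π₀ a)
    (μ : Measure ℝ) [IsFiniteMeasure μ]
    (hμ : μ = (volume.restrict (Set.Ici 0)).withDensity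
        (fun a => ENNReal.ofReal (π₀ a))) :
    IntegrableOn π₀ (Set.Ici 0) volume := by
  have h1 : (∫⁻ a in Set.Ici (0:ℝ), ENNReal.ofReal (π₀ a)) ≠ ⊤ := by
    have := measure_lt_top μ Set.univ
    rw [hμ, withDensity_apply _ MeasurableSet.univ, Measure.restrict_univ] at this
    exact this.ne
  have := integrable_toReal_of_lintegral_ne_top
    (f := fun a => ENNReal.ofReal (π₀ a))
    (μ := volume.restrict (Set.Ici 0))
    (hπ₀_cont.measurable.ennreal_ofReal.aemeasurable) h1
  refine this.congr (Filter.Eventually.of_forall fun a => ?_)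
  exact ENNReal.toReal_ofReal (hπ₀_nonneg a)

lemma firstterm (δ : ℝ) (hδ : 0 < δ) (φ : ℝ → ℝ) (hφ_cont : Continuous φ)
    (hφ_nonneg : ∀ t, 0 ≤ t → 0 ≤ φ t)
    (π₀ : ℝ → ℝ) (hπ₀_cont : Continuous π₀) (hπ₀_nonneg : ∀ a, 0 ≤ π₀ a)
    (hπint : IntegrableOn π₀ (Set.Ici 0) volume)
    (t : ℝ) (ht : 0 ≤ t) :
    (∫ a in Set.Ici (0:ℝ), π₀ a *
        (if δ - t ≤ a then Real.exp (-∫ s in (max (δ - a) 0)..t, φ s) else 0))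
      = Real.exp (-(Phi φ t)) * Nfun δ φ π₀ (min t δ) := by
  rw [Nfun]
  set m : ℝ := max (δ - t) 0 with hm
  have hm0 : 0 ≤ m := le_max_right _ _
  have hmδ : m ≤ δ := max_le (by linarith) hδ.le
  set F : ℝ → ℝ := fun a => π₀ a *
      (if δ - t ≤ a then Real.exp (-∫ s in (max (δ - a) 0)..t, φ s) else 0) with hF
  have hinner_cont : Continuous fun a => Real.exp (-∫ s in (max (δ - a) 0)..t, φ s) := by
    have h1 : Continuous fun a : ℝ => max (δ - a) 0 :=
      (continuous_const.sub continuous_id).max continuous_const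
    have h2 : Continuous fun c : ℝ => Phi φ t - Phi φ c :=
      continuous_const.sub (Phi_cont φ hφ_cont)
    have : (fun a : ℝ => Real.exp (-∫ s in (max (δ - a) 0)..t, φ s)) =
        fun a => Real.exp (-(Phi φ t - Phi φ (max (δ - a) 0))) := by
      funext a; rw [Phi_sub φ hφ_cont]
    rw [this]
    exact ((h2.comp h1).neg).rexp
  have hF_meas : Measurable F := by
    apply (hπ₀_cont.measurable).mul
    exact Measurable.ite (measurableSet_le measurable_const measurable_id)
      hinner_cont.measurable measurable_const
  have hF_bound : ∀ a ∈ Set.Ici (0:ℝ), ‖F a‖ ≤ π₀ a := by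
    intro a ha
    simp only [hF, Real.norm_eq_abs]
    by_cases h : δ - t ≤ a
    · rw [if_pos h]
      have hl : max (δ - a) 0 ≤ t := max_le (by linarith) ht
      have hint : 0 ≤ ∫ s in (max (δ - a) 0)..t, φ s := by
        apply intervalIntegral.integral_nonneg hl
        intro u hu
        exact hφ_nonneg u (le_trans (le_max_right _ _) hu.1)
      have he : Real.exp (-∫ s in (max (δ - a) 0)..t, φ s) ≤ 1 :=
        Real.exp_le_one_iff.mpr (by linarith)
      rw [abs_mul, abs_of_nonneg (hπ₀_nonneg a),
        abs_of_nonneg (Real.exp_pos _).le]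
      · nlinarith [hπ₀_nonneg a, Real.exp_pos (-∫ s in (max (δ - a) 0)..t, φ s)]
    · rw [if_neg h]; simp [abs_of_nonneg (hπ₀_nonneg a), hπ₀_nonneg a]
  have hF_int : ∀ S : Set ℝ, MeasurableSet S → S ⊆ Set.Ici 0 → IntegrableOn F S volume := by
    intro S hSm hS
    apply Integrable.mono' (hπint.mono_set hS) hF_meas.aestronglyMeasurable
    exact (ae_restrict_iff' hSm).mpr (Filter.Eventually.of_forall fun a ha => hF_bound a (hS ha))
  have hsplit : Set.Ici (0:ℝ) = Set.Ico 0 δ ∪ Set.Ici δ := (Set.Ico_union_Ici_eq_Ici hδ.le).symm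
  rw [hsplit, setIntegral_union (by rw [Set.disjoint_left]; intro a ha hb; exact absurd hb (not_le.mpr ha.2)) measurableSet_Ici
    (hF_int _ measurableSet_Ico (by rw [hsplit]; exact Set.subset_union_left))
    (hF_int _ measurableSet_Ici (by rw [hsplit]; exact Set.subset_union_right))]
  have hIci : (∫ a in Set.Ici δ, F a) = (∫ a in Set.Ici δ, π₀ a) * Real.exp (-(Phi φ t)) := by
    rw [← integral_mul_const]
    apply setIntegral_congr_fun measurableSet_Ici
    intro a ha
    simp only [hF]
    rw [if_pos (by simp at ha; linarith), max_eq_right (by simp at ha; linarith)]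
    rfl
  have hIco : (∫ a in Set.Ico 0 δ, F a)
      = (∫ u in (0:ℝ)..(min t δ), Real.exp (Phi φ u) * π₀ (δ - u)) * Real.exp (-(Phi φ t)) := by
    have step1 : (∫ a in Set.Ico 0 δ, F a) = ∫ a in Set.Ico 0 δ,
        Set.indicator (Set.Ici m) (fun a => π₀ a * Real.exp (Phi φ (δ - a) - Phi φ t)) a := by
      apply setIntegral_congr_fun measurableSet_Ico
      intro a ha
      simp only [hF]
      by_cases h : δ - t ≤ a
      · rw [if_pos h, Set.indicator_of_mem (by exact max_le h ha.1),
          max_eq_left (by linarith [ha.2]), Phi_sub φ hφ_cont, neg_sub]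
      · rw [if_neg h, Set.indicator_of_notMem, mul_zero]
        simp only [Set.mem_Ici, not_le]
        calc a < δ - t := lt_of_not_ge h
        _ ≤ m := le_max_left _ _
    rw [step1, setIntegral_indicator measurableSet_Ici]
    have hset : Set.Ico (0:ℝ) δ ∩ Set.Ici m = Set.Ico m δ := by
      rw [Set.Ico_inter_Ici, max_eq_right hm0]
    rw [hset, integral_Ico_eq_integral_Ioo, ← integral_Ioc_eq_integral_Ioo,
      ← intervalIntegral.integral_of_le hmδ]
    have step2 : (∫ a in m..δ, π₀ a * Real.exp (Phi φ (δ - a) - Phi φ t))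
        = ∫ a in m..δ, (fun u => π₀ (δ - u) * Real.exp (Phi φ u - Phi φ t)) (δ - a) := by
      congr 1; funext a; simp [sub_sub_cancel]
    rw [step2, intervalIntegral.integral_comp_sub_left
        (fun u => π₀ (δ - u) * Real.exp (Phi φ u - Phi φ t)) δ, sub_self]
    have hδm : δ - m = min t δ := by
      rcases le_total (δ - t) 0 with h | h
      · rw [hm, max_eq_right h, sub_zero, min_eq_right (by linarith)]
      · rw [hm, max_eq_left h, sub_sub_cancel, min_eq_left (by linarith)]
    rw [hδm, ← intervalIntegral.integral_mul_const]
    congr 1; funext u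
    rw [Real.exp_sub, Real.exp_neg]; ring
  rw [hIci, hIco]; ring

lemma secondterm (δ : ℝ) (φ : ℝ → ℝ) (hφ_cont : Continuous φ)
    (p : ℝ → ℝ) (t : ℝ) :
    (∫ s in (0:ℝ)..(max (t - δ) 0), φ s * p s * Real.exp (-∫ u in (s + δ)..t, φ u))
      = Real.exp (-(Phi φ t)) * Hfun δ φ p (max (t - δ) 0) := by
  rw [Hfun, ← intervalIntegral.integral_const_mul]
  apply intervalIntegral.integral_congr
  intro s hs
  rw [Set.uIcc_of_le (le_max_right _ _)] at hs
  simp only [gfun]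
  rw [if_pos hs.1, Phi_sub φ hφ_cont, neg_sub, Real.exp_sub, Real.exp_neg]
  ring

lemma gfun_meas (δ : ℝ) (φ p : ℝ → ℝ) (hφ : Continuous φ) (hp : Measurable p) :
    Measurable (gfun δ φ p) := by
  apply Measurable.ite (measurableSet_le measurable_const measurable_id)
  · exact ((hφ.measurable.mul hp).mul
      (((Phi_cont φ hφ).comp (continuous_id.add continuous_const)).rexp.measurable))
  · exact measurable_const

lemma gfun_int (δ : ℝ) (φ p : ℝ → ℝ) (hφ : Continuous φ) (hp : Measurable p)
    (hp_loc : ∀ T, 0 ≤ T → ∃ C, ∀ t ∈ Set.Icc (0:ℝ) T, |p t| ≤ C) (a b : ℝ) :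
    IntervalIntegrable (gfun δ φ p) volume a b := by
  obtain ⟨C, hC⟩ := hp_loc (max (max a b) 0) (le_max_right _ _)
  set C' : ℝ := max C 0 with hC'
  have hq : IntervalIntegrable (fun s => C' * (|φ s| * Real.exp (Phi φ (s + δ)))) volume a b :=
    (continuous_const.mul ((hφ.abs).mul
      (((Phi_cont φ hφ).comp (continuous_id.add continuous_const)).rexp))).intervalIntegrable a b
  apply hq.mono_fun ((gfun_meas δ φ p hφ hp).aestronglyMeasurable)
  apply (ae_restrict_iff' measurableSet_uIoc).mpr
  apply Filter.Eventually.of_forall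
  intro s hs
  have hsb : s ≤ max (max a b) 0 :=
    le_trans hs.2 (le_max_left _ _)
  simp only [gfun, Real.norm_eq_abs]
  by_cases h : 0 ≤ s
  · rw [if_pos h, abs_mul, abs_mul, abs_of_pos (Real.exp_pos _)]
    have hps : |p s| ≤ C' := le_trans (hC s ⟨h, hsb⟩) (le_max_left _ _)
    rw [abs_of_nonneg (by positivity : (0:ℝ) ≤ C' * (|φ s| * Real.exp (Phi φ (s + δ))))]
    have h1 : |φ s| * |p s| ≤ |φ s| * C' := mul_le_mul_of_nonneg_left hps (abs_nonneg _)
    nlinarith [Real.exp_pos (Phi φ (s + δ)), abs_nonneg (φ s)]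
  · rw [if_neg h]
    simp only [abs_zero]
    positivity

/-- If the initial law μ has a continuous nonnegative density π₀ with respect
to Lebesgue measure on [0,∞), then any locally bounded measurable solution p of the
renewal equation is continuous on [0,∞), C¹ on (0,δ) with
p'(t) = π₀(δ−t) − φ(t)p(t), C¹ on (δ,∞) with p'(t) = −φ(t)p(t) + φ(t−δ)p(t−δ),
and at t = δ, the one-sided derivatives are p'(δ−) = π₀(0) − φ(δ)p(δ) and
p'(δ+) = −φ(δ)p(δ) + φ(0)p(0). -/
theorem stmt4 (δ : ℝ) (hδ : 0 < δ) (φ : ℝ → ℝ) (hφ_cont : Continuous φ)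
    (hφ_nonneg : ∀ t, 0 ≤ t → 0 ≤ φ t)
    (π₀ : ℝ → ℝ) (hπ₀_cont : Continuous π₀) (hπ₀_nonneg : ∀ a, 0 ≤ π₀ a)
    (μ : Measure ℝ) [IsFiniteMeasure μ]
    (hμ : μ = (volume.restrict (Set.Ici 0)).withDensity
        (fun a => ENNReal.ofReal (π₀ a)))
    (p : ℝ → ℝ) (hp_meas : Measurable p)
    (hp_loc : ∀ T, 0 ≤ T → ∃ C, ∀ t ∈ Set.Icc (0:ℝ) T, |p t| ≤ C)
    (hren : ∀ t, 0 ≤ t →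
      p t = (∫ a, (if δ - t ≤ a then
                Real.exp (-∫ s in (max (δ - a) 0)..t, φ s) else 0) ∂μ)
          + ∫ s in (0:ℝ)..(max (t - δ) 0),
              φ s * p s * Real.exp (-∫ u in (s + δ)..t, φ u)) :
    ContinuousOn p (Set.Ici 0) ∧
    (∀ t ∈ Set.Ioo (0:ℝ) δ,
      HasDerivAt p (π₀ (δ - t) - φ t * p t) t) ∧
    (∀ t, δ < t →
      HasDerivAt p (-(φ t) * p t + φ (t - δ) * p (t - δ)) t) ∧
    HasDerivWithinAt p (π₀ 0 - φ δ * p δ) (Set.Iic δ) δ ∧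
    HasDerivWithinAt p (-(φ δ) * p δ + φ 0 * p 0) (Set.Ici δ) δ := by
  have hπint : IntegrableOn π₀ (Set.Ici 0) volume := pint π₀ hπ₀_cont hπ₀_nonneg μ hμ
  have g_int : ∀ a b : ℝ, IntervalIntegrable (gfun δ φ p) volume a b :=
    gfun_int δ φ p hφ_cont hp_meas hp_loc
  -- KEY representation
  have key : ∀ t, 0 ≤ t → p t = Real.exp (-(Phi φ t)) *
      (Nfun δ φ π₀ (min t δ) + Hfun δ φ p (max (t - δ) 0)) := by
    intro t ht
    rw [hren t ht, hμ, dens π₀ hπ₀_cont hπ₀_nonneg,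
      firstterm δ hδ φ hφ_cont hφ_nonneg π₀ hπ₀_cont hπ₀_nonneg hπint t ht,
      secondterm δ φ hφ_cont p t]
    ring
  -- continuity pieces
  have hN_cont : Continuous (Nfun δ φ π₀) := by
    apply continuous_const.add
    apply intervalIntegral.continuous_primitive
    exact fun a b => (((Phi_cont φ hφ_cont).rexp).mul
      (hπ₀_cont.comp (continuous_const.sub continuous_id))).intervalIntegrable a b
  have hH_cont : Continuous (Hfun δ φ p) := intervalIntegral.continuous_primitive g_int 0
  have hE_cont : Continuous fun x => Real.exp (-(Phi φ x)) :=
    ((Phi_cont φ hφ_cont).neg).rexp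
  have hq_cont : Continuous fun x => Real.exp (-(Phi φ x)) *
      (Nfun δ φ π₀ (min x δ) + Hfun δ φ p (max (x - δ) 0)) := by
    apply hE_cont.mul
    exact (hN_cont.comp (continuous_id.min continuous_const)).add
      (hH_cont.comp ((continuous_id.sub continuous_const).max continuous_const))
  have hcontp : ContinuousOn p (Set.Ici 0) :=
    (hq_cont.continuousOn).congr fun x hx => key x hx

  -- derivative building blocks
  have hexp : ∀ x : ℝ, Real.exp (-(Phi φ x)) * Real.exp (Phi φ x) = 1 := fun x => by
    rw [← Real.exp_add, neg_add_cancel, Real.exp_zero]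
  have hE : ∀ x : ℝ, HasDerivAt (fun y => Real.exp (-(Phi φ y)))
      (-(φ x) * Real.exp (-(Phi φ x))) x := by
    intro x
    have h := ((Phi_hasDerivAt φ hφ_cont x).neg).exp
    refine h.congr_deriv ?_
    simp only [Pi.neg_apply]; ring
  have hNc : Continuous fun u => Real.exp (Phi φ u) * π₀ (δ - u) :=
    ((Phi_cont φ hφ_cont).rexp).mul (hπ₀_cont.comp (continuous_const.sub continuous_id))
  have hN_deriv : ∀ x : ℝ, HasDerivAt (Nfun δ φ π₀) (Real.exp (Phi φ x) * π₀ (δ - x)) x := by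
    intro x
    apply HasDerivAt.const_add
    exact intervalIntegral.integral_hasDerivAt_right (hNc.intervalIntegrable _ _)
      (hNc.stronglyMeasurable.stronglyMeasurableAtFilter) hNc.continuousAt
  have hH0eq : Hfun δ φ p 0 = 0 := intervalIntegral.integral_same
  refine ⟨hcontp, ?_, ?_, ?_, ?_⟩
  -- Part 2 : (0, δ)
  · intro t ht
    have hev : p =ᶠ[nhds t] fun y => Real.exp (-(Phi φ y)) * Nfun δ φ π₀ y := by
      filter_upwards [isOpen_Ioo.mem_nhds ht] with x hx
      rw [key x hx.1.le, min_eq_left hx.2.le,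
        max_eq_right (by linarith [hx.2] : x - δ ≤ 0), hH0eq, add_zero]
    have hd := ((hE t).mul (hN_deriv t)).congr_of_eventuallyEq hev
    have hpt : p t = Real.exp (-(Phi φ t)) * Nfun δ φ π₀ t := hev.self_of_nhds
    refine hd.congr_deriv (Eq.symm ?_)
    rw [hpt]
    linear_combination (-(π₀ (δ - t))) * hexp t
  -- Part 3 : (δ, ∞)
  · intro t htδ
    have hx0 : (0:ℝ) < t - δ := by linarith
    have hpc : ContinuousAt p (t - δ) :=
      (hcontp (t - δ) hx0.le).continuousAt (Ici_mem_nhds hx0)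
    have hin : ContinuousAt (fun s => φ s * p s * Real.exp (Phi φ (s + δ))) (t - δ) :=
      (hφ_cont.continuousAt.mul hpc).mul
        (((Phi_cont φ hφ_cont).comp (continuous_id.add continuous_const)).rexp.continuousAt)
    have hgc : ContinuousAt (gfun δ φ p) (t - δ) := by
      apply hin.congr
      filter_upwards [Ioi_mem_nhds hx0] with y hy
      rw [gfun, if_pos (le_of_lt hy)]
    have hH_deriv : HasDerivAt (Hfun δ φ p) (gfun δ φ p (t - δ)) (t - δ) :=
      intervalIntegral.integral_hasDerivAt_right (g_int 0 (t - δ))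
        ((gfun_meas δ φ p hφ_cont hp_meas).stronglyMeasurable.stronglyMeasurableAtFilter) hgc
    have h2 : HasDerivAt (fun y => Hfun δ φ p (y - δ)) (gfun δ φ p (t - δ) * 1) t :=
      by have := HasDerivAt.comp t hH_deriv ((hasDerivAt_id t).sub_const δ); exact this
    have hev : p =ᶠ[nhds t] fun y => Real.exp (-(Phi φ y)) *
        (Nfun δ φ π₀ δ + Hfun δ φ p (y - δ)) := by
      filter_upwards [Ioi_mem_nhds htδ] with x hx
      rw [key x (by linarith [Set.mem_Ioi.mp hx] : (0:ℝ) ≤ x),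
        min_eq_right (le_of_lt hx), max_eq_left (by simp at hx; linarith)]
    have hd := ((hE t).mul (h2.const_add (Nfun δ φ π₀ δ))).congr_of_eventuallyEq hev
    have hpt : p t = Real.exp (-(Phi φ t)) * (Nfun δ φ π₀ δ + Hfun δ φ p (t - δ)) :=
      hev.self_of_nhds
    have hg' : gfun δ φ p (t - δ) = φ (t - δ) * p (t - δ) * Real.exp (Phi φ t) := by
      rw [gfun, if_pos hx0.le, show t - δ + δ = t from by ring]
    refine hd.congr_deriv (Eq.symm ?_)
    rw [hpt, hg']
    linear_combination (-(φ (t - δ) * p (t - δ))) * hexp t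
  -- Part 4 : left derivative at δ
  · have hev : p =ᶠ[nhdsWithin δ (Set.Iic δ)] fun y => Real.exp (-(Phi φ y)) * Nfun δ φ π₀ y := by
      filter_upwards [nhdsWithin_le_nhds (Ioi_mem_nhds hδ), self_mem_nhdsWithin] with x hx0 hxδ
      rw [key x (le_of_lt hx0), min_eq_left hxδ,
        max_eq_right (by simp at hxδ ⊢; linarith : x - δ ≤ 0), hH0eq, add_zero]
    have hpδ : p δ = Real.exp (-(Phi φ δ)) * Nfun δ φ π₀ δ := by
      rw [key δ hδ.le, min_self, sub_self, max_self, hH0eq, add_zero]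
    have hd := (((hE δ).mul (hN_deriv δ)).hasDerivWithinAt).congr_of_eventuallyEq hev hpδ
    refine hd.congr_deriv (Eq.symm ?_)
    rw [hpδ, sub_self]
    linear_combination (-(π₀ 0)) * hexp δ
  -- Part 5 : right derivative at δ
  · have hgc0 : ContinuousWithinAt (gfun δ φ p) (Set.Ioi 0) 0 := by
      have hin : ContinuousWithinAt (fun s => φ s * p s * Real.exp (Phi φ (s + δ)))
          (Set.Ioi 0) 0 :=
        ((hφ_cont.continuousAt.continuousWithinAt).mul
          ((hcontp 0 Set.self_mem_Ici).mono Set.Ioi_subset_Ici_self)).mul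
          ((((Phi_cont φ hφ_cont).comp
            (continuous_id.add continuous_const)).rexp).continuousAt.continuousWithinAt)
      exact hin.congr (fun y hy => by rw [gfun, if_pos (le_of_lt hy)])
        (by rw [gfun, if_pos le_rfl])
    have hH0 : HasDerivWithinAt (Hfun δ φ p) (gfun δ φ p 0) (Set.Ici 0) 0 :=
      intervalIntegral.integral_hasDerivWithinAt_right (g_int 0 0)
        ((gfun_meas δ φ p hφ_cont hp_meas).stronglyMeasurable.stronglyMeasurableAtFilter) hgc0
    have hH0' : HasDerivWithinAt (Hfun δ φ p) (gfun δ φ p 0) (Set.Ici 0) (δ - δ) := by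
      rw [sub_self]; exact hH0
    have hsub : HasDerivWithinAt (fun y : ℝ => y - δ) 1 (Set.Ici δ) δ :=
      ((hasDerivAt_id δ).sub_const δ).hasDerivWithinAt
    have hmaps : Set.MapsTo (fun y : ℝ => y - δ) (Set.Ici δ) (Set.Ici 0) := by
      intro y hy
      simp only [Set.mem_Ici] at hy ⊢
      linarith
    have hcomp' : HasDerivWithinAt ((Hfun δ φ p) ∘ fun y => y - δ) (gfun δ φ p 0 * 1)
        (Set.Ici δ) δ := HasDerivWithinAt.comp δ hH0' hsub hmaps
    have hcomp : HasDerivWithinAt (fun y => Hfun δ φ p (y - δ)) (gfun δ φ p 0 * 1)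
        (Set.Ici δ) δ := hcomp'
    have hps : ∀ x ∈ Set.Ici δ, p x = Real.exp (-(Phi φ x)) *
        (Nfun δ φ π₀ δ + Hfun δ φ p (x - δ)) := by
      intro x hx
      rw [key x (le_trans hδ.le hx), min_eq_right hx, max_eq_left (by simp at hx; linarith)]
    have hd := (((hE δ).hasDerivWithinAt).mul
      (hcomp.const_add (Nfun δ φ π₀ δ))).congr hps (hps δ Set.self_mem_Ici)
    have hg0 : gfun δ φ p 0 = φ 0 * p 0 * Real.exp (Phi φ δ) := by
      rw [gfun, if_pos le_rfl, zero_add]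
    refine hd.congr_deriv (Eq.symm ?_)
    rw [hps δ Set.self_mem_Ici, hg0, sub_self, hH0eq]
    linear_combination (-(φ 0 * p 0)) * hexp δ
end

section
/- Let T ≥ 0, let h : [0,∞) → [0,∞) be locally integrable, let g : [0,∞) → [0,∞) be locally bounded, and suppose b > 0 satisfies ∫_0^T h(s)·1{h(s) ≥ b} ds < 1/2. If u : [0,∞) → [0,∞) is locally bounded and satisfies u(t) ≤ g(t) + ∫_0^t h(t−s) u(s) ds for all t ∈ [0,T], then sup_{t ≤ T} u(t) ≤ 2 e^{2bT} · sup_{t ≤ T} g(t). -/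
open MeasureTheory Real

private lemma stmt6_int_pow (b t : ℝ) (hb : 0 < b) (k : ℕ) :
    (2*b) * ∫ s in (0:ℝ)..t, (2*b*s)^k / (Nat.factorial k : ℝ)
      = (2*b*t)^(k+1) / (Nat.factorial (k+1) : ℝ) := by
  have h1 : ∀ s : ℝ, (2*b*s)^k / (Nat.factorial k : ℝ)
      = ((2*b)^k / (Nat.factorial k : ℝ)) * s^k := by
    intro s; rw [mul_pow]; ring
  simp_rw [h1]
  rw [intervalIntegral.integral_const_mul, integral_pow]
  have hk : (Nat.factorial k : ℝ) ≠ 0 := Nat.cast_ne_zero.2 (Nat.factorial_ne_zero k)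
  have hk1 : ((k:ℝ) + 1) ≠ 0 := by positivity
  rw [Nat.factorial_succ]
  push_cast
  rw [mul_pow, mul_pow]
  field_simp
  ring

private lemma stmt6_iter (b G C T : ℝ) (hb : 0 < b) (hG : 0 ≤ G) (hC : 0 ≤ C)
    (U : ℝ → ℝ)
    (hUint : ∀ t ∈ Set.Icc (0:ℝ) T, IntervalIntegrable U volume 0 t)
    (hUC : ∀ t ∈ Set.Icc (0:ℝ) T, U t ≤ C)
    (hkey : ∀ t ∈ Set.Icc (0:ℝ) T, U t ≤ 2*G + 2*b * ∫ s in (0:ℝ)..t, U s) :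
    ∀ t ∈ Set.Icc (0:ℝ) T, U t ≤ 2*G*Real.exp (2*b*t) := by
  have P : ∀ n : ℕ, ∀ t ∈ Set.Icc (0:ℝ) T,
      U t ≤ 2*G*(∑ k ∈ Finset.range n, (2*b*t)^k / (Nat.factorial k : ℝ))
            + C * ((2*b*t)^n / (Nat.factorial n : ℝ)) := by
    intro n
    induction n with
    | zero => intro t ht; simpa using hUC t ht
    | succ n ih =>
      intro t ht
      obtain ⟨ht0, htT⟩ := ht
      set F : ℝ → ℝ := fun s => 2*G*(∑ k ∈ Finset.range n, (2*b*s)^k / (Nat.factorial k : ℝ))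
          + C * ((2*b*s)^n / (Nat.factorial n : ℝ)) with hF
      have hc1 : Continuous (fun s : ℝ =>
          2*G*(∑ k ∈ Finset.range n, (2*b*s)^k / (Nat.factorial k : ℝ))) :=
        continuous_const.mul (continuous_finset_sum _ (fun k _ =>
          ((continuous_const.mul continuous_id).pow k).div_const _))
      have hc2 : Continuous (fun s : ℝ => C * ((2*b*s)^n / (Nat.factorial n : ℝ))) :=
        continuous_const.mul (((continuous_const.mul continuous_id).pow n).div_const _)
      have hFc : Continuous F := hc1.add hc2
      have h1 : (∫ s in (0:ℝ)..t, U s) ≤ ∫ s in (0:ℝ)..t, F s := by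
        apply intervalIntegral.integral_mono_on ht0 (hUint t ⟨ht0, htT⟩)
          (hFc.intervalIntegrable 0 t)
        intro s hs
        exact ih s ⟨hs.1, hs.2.trans htT⟩
      have hintk : ∀ k : ℕ, IntervalIntegrable
          (fun s : ℝ => (2*b*s)^k / (Nat.factorial k : ℝ)) volume 0 t :=
        fun k => (((continuous_const.mul continuous_id).pow k).div_const _).intervalIntegrable 0 t
      have h2 : (2*b) * ∫ s in (0:ℝ)..t, F s
          = 2*G*(∑ k ∈ Finset.range n, (2*b*t)^(k+1) / (Nat.factorial (k+1) : ℝ))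
            + C * ((2*b*t)^(n+1) / (Nat.factorial (n+1) : ℝ)) := by
        simp only [hF]
        rw [intervalIntegral.integral_add (hc1.intervalIntegrable 0 t)
          (hc2.intervalIntegrable 0 t)]
        rw [intervalIntegral.integral_const_mul, intervalIntegral.integral_const_mul,
          intervalIntegral.integral_finset_sum (fun k _ => hintk k)]
        simp_rw [← stmt6_int_pow b t hb]
        rw [← Finset.mul_sum]
        ring
      have h3 : U t ≤ 2*G + 2*b * ∫ s in (0:ℝ)..t, F s := by
        have := hkey t ⟨ht0, htT⟩
        nlinarith [h1]
      rw [h2] at h3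
      have h4 : 2*G + 2*G*(∑ k ∈ Finset.range n, (2*b*t)^(k+1) / (Nat.factorial (k+1) : ℝ))
          = 2*G*(∑ k ∈ Finset.range (n+1), (2*b*t)^k / (Nat.factorial k : ℝ)) := by
        rw [Finset.sum_range_succ']
        simp [Nat.factorial]
        ring
      linarith [h3, h4.le, h4.ge]
  intro t ht
  have h2bt : 0 ≤ 2*b*t := by nlinarith [ht.1]
  have hbound : ∀ n : ℕ, U t ≤ 2*G*Real.exp (2*b*t) + C * ((2*b*t)^n / (Nat.factorial n : ℝ)) := by
    intro n
    have hsum := Real.sum_le_exp_of_nonneg h2bt n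
    have := P n t ht
    nlinarith [hsum, hG]
  have hlim : Filter.Tendsto
      (fun n : ℕ => 2*G*Real.exp (2*b*t) + C * ((2*b*t)^n / (Nat.factorial n : ℝ)))
      Filter.atTop (nhds (2*G*Real.exp (2*b*t) + C * 0)) :=
    Filter.Tendsto.add tendsto_const_nhds
      ((FloorSemiring.tendsto_pow_div_factorial_atTop (2*b*t)).const_mul C)
  rw [mul_zero, add_zero] at hlim
  exact ge_of_tendsto' hlim hbound

/-- Gronwall-type convolution lemma: if h is nonnegative locally
integrable, g nonnegative locally bounded, b > 0 with ∫_0^T h·1{h ≥ b} < 1/2 and a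
locally bounded nonnegative u satisfies u(t) ≤ g(t) + ∫_0^t h(t−s)u(s) ds on [0,T],
then sup_{t ≤ T} u(t) ≤ 2 e^{2bT} sup_{t ≤ T} g(t). -/
theorem stmt6 (T : ℝ) (hT : 0 ≤ T) (h g u : ℝ → ℝ)
    (hh_nonneg : ∀ t, 0 ≤ t → 0 ≤ h t)
    (hh_int : ∀ S, 0 ≤ S → IntervalIntegrable h volume 0 S)
    (hg_nonneg : ∀ t, 0 ≤ t → 0 ≤ g t)
    (hg_loc : ∀ S, 0 ≤ S → ∃ C, ∀ t ∈ Set.Icc (0:ℝ) S, g t ≤ C)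
    (b : ℝ) (hb : 0 < b)
    (hsmall : ∫ s in (0:ℝ)..T, (if b ≤ h s then h s else 0) < 1 / 2)
    (hu_nonneg : ∀ t, 0 ≤ t → 0 ≤ u t)
    (hu_loc : ∀ S, 0 ≤ S → ∃ C, ∀ t ∈ Set.Icc (0:ℝ) S, u t ≤ C)
    (hu : ∀ t ∈ Set.Icc (0:ℝ) T, u t ≤ g t + ∫ s in (0:ℝ)..t, h (t - s) * u s) :
    ∀ t ∈ Set.Icc (0:ℝ) T,
      u t ≤ 2 * Real.exp (2 * b * T) * sSup (g '' Set.Icc 0 T) := by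
  have hT0 : (0:ℝ) ∈ Set.Icc (0:ℝ) T := ⟨le_refl 0, hT⟩
  set G := sSup (g '' Set.Icc 0 T) with hGdef
  obtain ⟨Cg, hCg⟩ := hg_loc T hT
  have hbddg : BddAbove (g '' Set.Icc 0 T) := ⟨Cg, by rintro _ ⟨x, hx, rfl⟩; exact hCg x hx⟩
  have hgG : ∀ t ∈ Set.Icc (0:ℝ) T, g t ≤ G := fun t ht => le_csSup hbddg ⟨t, ht, rfl⟩
  have hG0 : 0 ≤ G := (hg_nonneg 0 le_rfl).trans (hgG 0 hT0)
  -- the running supremum U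
  set U : ℝ → ℝ := fun t => sSup (u '' Set.Icc 0 t) with hUdef
  have hbddu : ∀ t : ℝ, BddAbove (u '' Set.Icc 0 t) := by
    intro t
    rcases le_or_gt 0 t with h0 | h0
    · obtain ⟨C, hC⟩ := hu_loc t h0
      exact ⟨C, by rintro _ ⟨x, hx, rfl⟩; exact hC x hx⟩
    · rw [Set.Icc_eq_empty_of_lt h0, Set.image_empty]
      exact bddAbove_empty
  have huU : ∀ t, 0 ≤ t → ∀ s ∈ Set.Icc (0:ℝ) t, u s ≤ U t :=
    fun t _ s hs => le_csSup (hbddu t) ⟨s, hs, rfl⟩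
  have hU0 : ∀ t, 0 ≤ t → 0 ≤ U t :=
    fun t h0 => (hu_nonneg 0 le_rfl).trans (huU t h0 0 ⟨le_rfl, h0⟩)
  have hUle : ∀ t, 0 ≤ t → ∀ C : ℝ, (∀ s ∈ Set.Icc (0:ℝ) t, u s ≤ C) → U t ≤ C := by
    intro t h0 C hC
    exact csSup_le (Set.Nonempty.image u ⟨0, le_rfl, h0⟩)
      (by rintro _ ⟨x, hx, rfl⟩; exact hC x hx)
  have hUmono : Monotone U := by
    intro s t hst
    rcases le_or_gt 0 s with h0 | h0
    · exact csSup_le_csSup (hbddu t) (Set.Nonempty.image u ⟨0, le_rfl, h0⟩)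
        (Set.image_mono (Set.Icc_subset_Icc le_rfl hst))
    · have hs : U s = 0 := by
        rw [hUdef]; simp [Set.Icc_eq_empty_of_lt h0, Real.sSup_empty]
      rcases le_or_gt 0 t with h1 | h1
      · rw [hs]; exact hU0 t h1
      · have ht : U t = 0 := by
          rw [hUdef]; simp [Set.Icc_eq_empty_of_lt h1, Real.sSup_empty]
        rw [hs, ht]
  have hUint : ∀ t ∈ Set.Icc (0:ℝ) T, IntervalIntegrable U volume 0 t :=
    fun t _ => (hUmono.monotoneOn _).intervalIntegrable
  -- the cut function
  set c : ℝ → ℝ := fun s => if b ≤ h s then h s else 0 with hcdef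
  have hc_nonneg : ∀ s, 0 ≤ c s := by
    intro s; rw [hcdef]; dsimp only
    split_ifs with hs
    · linarith
    · exact le_rfl
  have hcint : ∀ S, 0 ≤ S → IntervalIntegrable c volume 0 S := by
    intro S hS
    have hi : IntegrableOn h (Set.Ioc 0 S) volume := (hh_int S hS).1
    have hm : AEMeasurable h (volume.restrict (Set.Ioc 0 S)) := hi.aemeasurable
    have hcm : AEStronglyMeasurable c (volume.restrict (Set.Ioc 0 S)) := by
      have hmk : Measurable (fun s => if b ≤ hm.mk h s then hm.mk h s else 0) :=
        Measurable.ite (measurableSet_le measurable_const hm.measurable_mk)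
          hm.measurable_mk measurable_const
      refine hmk.aestronglyMeasurable.congr ?_
      filter_upwards [hm.ae_eq_mk] with s hs
      rw [hcdef]; dsimp only; rw [← hs]
    have hIc : IntegrableOn c (Set.Ioc 0 S) volume := by
      apply Integrable.mono hi hcm
      filter_upwards with s
      rw [hcdef]; dsimp only
      split_ifs with hs
      · exact le_rfl
      · simp [abs_nonneg]
    exact (intervalIntegrable_iff_integrableOn_Ioc_of_le hS).mpr hIc
  set ε := ∫ s in (0:ℝ)..T, c s with hεdef
  have hεsmall : ε < 1/2 := hsmall
  -- the key Gronwall-type inequality for U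
  have hkey : ∀ t ∈ Set.Icc (0:ℝ) T, U t ≤ 2*G + 2*b * ∫ s in (0:ℝ)..t, U s := by
    intro t ht
    obtain ⟨ht0, htT⟩ := ht
    have hIU : 0 ≤ ∫ s in (0:ℝ)..t, U s :=
      intervalIntegral.integral_nonneg ht0 (fun s hs => hU0 s hs.1)
    have step1 : U t ≤ G + b * (∫ s in (0:ℝ)..t, U s) + ε * U t := by
      apply hUle t ht0
      intro t' ht'
      have ht'0 : (0:ℝ) ≤ t' := ht'.1
      have ht't : t' ≤ t := ht'.2
      have ht'T : t' ≤ T := ht't.trans htT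
      have hbound : u t' ≤ g t' + ∫ s in (0:ℝ)..t', h (t' - s) * u s := hu t' ⟨ht'0, ht'T⟩
      have hUt0 : 0 ≤ U t := hU0 t ht0
      have hUt'int : IntervalIntegrable U volume 0 t' := hUint t' ⟨ht'0, ht'T⟩
      have hcint' : IntervalIntegrable (fun s => c (t' - s)) volume 0 t' := by
        have h2' := ((hcint t' ht'0).comp_sub_left t').symm
        simpa using h2'
      have hψint : IntervalIntegrable (fun s => b * U s + c (t' - s) * U t) volume 0 t' :=
        (hUt'int.const_mul b).add (hcint'.mul_const (U t))
      have hint_le : (∫ s in (0:ℝ)..t', h (t' - s) * u s)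
          ≤ ∫ s in (0:ℝ)..t', (b * U s + c (t' - s) * U t) := by
        by_cases hf : IntervalIntegrable (fun s => h (t' - s) * u s) volume 0 t'
        · apply intervalIntegral.integral_mono_on ht'0 hf hψint
          intro s hs
          have hs0 : (0:ℝ) ≤ s := hs.1
          have hus : u s ≤ U s := huU s hs0 s ⟨hs0, le_rfl⟩
          have husU : u s ≤ U t := huU t ht0 s ⟨hs0, hs.2.trans ht't⟩
          have hun : 0 ≤ u s := hu_nonneg s hs0
          have hUs0 : 0 ≤ U s := hU0 s hs0
          by_cases hbs : b ≤ h (t' - s)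
          · have hceq : c (t' - s) = h (t' - s) := by rw [hcdef]; dsimp only; rw [if_pos hbs]
            rw [hceq]
            nlinarith [mul_le_mul_of_nonneg_left husU (hh_nonneg (t' - s) (by linarith [hs.2]))]
          · have hceq : c (t' - s) = 0 := by rw [hcdef]; dsimp only; rw [if_neg hbs]
            rw [hceq, zero_mul, add_zero]
            have h1 : h (t' - s) * u s ≤ b * u s :=
              mul_le_mul_of_nonneg_right (le_of_not_ge hbs) hun
            have h2 : b * u s ≤ b * U s := mul_le_mul_of_nonneg_left hus hb.le
            linarith
        · rw [intervalIntegral.integral_undef hf]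
          exact intervalIntegral.integral_nonneg ht'0
            (fun s hs => add_nonneg (mul_nonneg hb.le (hU0 s hs.1))
              (mul_nonneg (hc_nonneg _) hUt0))
      have hψeq : (∫ s in (0:ℝ)..t', (b * U s + c (t' - s) * U t))
          = b * (∫ s in (0:ℝ)..t', U s) + (∫ s in (0:ℝ)..t', c (t' - s)) * U t := by
        rw [intervalIntegral.integral_add (hUt'int.const_mul b) (hcint'.mul_const (U t)),
          intervalIntegral.integral_const_mul, intervalIntegral.integral_mul_const]
      have hceq2 : (∫ s in (0:ℝ)..t', c (t' - s)) = ∫ s in (0:ℝ)..t', c s := by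
        have := intervalIntegral.integral_comp_sub_left (a := 0) (b := t') c t'
        simpa using this
      have hcle : (∫ s in (0:ℝ)..t', c s) ≤ ε := by
        apply intervalIntegral.integral_mono_interval le_rfl ht'0 ht'T
        · exact Filter.Eventually.of_forall hc_nonneg
        · exact hcint T hT
      have hUle' : (∫ s in (0:ℝ)..t', U s) ≤ ∫ s in (0:ℝ)..t, U s := by
        apply intervalIntegral.integral_mono_interval le_rfl ht'0 ht't
        · filter_upwards [ae_restrict_mem measurableSet_Ioc] with s hs
          exact hU0 s hs.1.le
        · exact hUint t ⟨ht0, htT⟩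
      have hchain : u t' ≤ g t' + (b * (∫ s in (0:ℝ)..t', U s)
          + (∫ s in (0:ℝ)..t', c s) * U t) := by
        rw [← hceq2, ← hψeq]; linarith [hbound, hint_le]
      have hgt' := hgG t' ⟨ht'0, ht'T⟩
      nlinarith [mul_le_mul_of_nonneg_right hcle hUt0,
        mul_le_mul_of_nonneg_left hUle' hb.le]
    have hprod : 0 ≤ (1/2 - ε) * U t := by
      apply mul_nonneg (by linarith) (hU0 t ht0)
    nlinarith [hU0 t ht0]
  -- apply the iteration lemma with C = U T
  have hCle : ∀ t ∈ Set.Icc (0:ℝ) T, U t ≤ U T := fun t ht => hUmono ht.2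
  have final := stmt6_iter b G (U T) T hb hG0 (hU0 T hT) U hUint hCle hkey
  intro t ht
  have hft := final t ht
  have hut : u t ≤ U t := huU t ht.1 t ⟨ht.1, le_rfl⟩
  have hexp : Real.exp (2*b*t) ≤ Real.exp (2*b*T) :=
    Real.exp_le_exp.mpr (by nlinarith [ht.2])
  calc u t ≤ U t := hut
    _ ≤ 2*G*Real.exp (2*b*t) := hft
    _ ≤ 2*G*Real.exp (2*b*T) := by nlinarith [Real.exp_pos (2*b*t)]
    _ = 2 * Real.exp (2*b*T) * G := by ring
end

section
/- Let T ≥ 0, let h : [0,∞) → [0,∞) be locally integrable, let g : [0,∞) → [0,∞) be locally bounded, and suppose b > 0 satisfies ∫_0^T h(s)·1{h(s) ≥ b} ds < 1/2. Let (u^n)_{n≥0} be a sequence of locally bounded nonnegative functions on [0,∞) satisfying u^{n+1}(t) ≤ g(t) + ∫_0^t h(t−s) u^n(s) ds for all t ∈ [0,T] and all n ≥ 0. Then sup_n sup_{t ≤ T} u^n(t) ≤ 2 e^{2bT} ( sup_{t ≤ T} g(t) + sup_{t ≤ T} u^0(t) ). -/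
open MeasureTheory Real

private lemma exp_int (c t : ℝ) (hc : c ≠ 0) :
    ∫ s in (0:ℝ)..t, Real.exp (c * s) = (Real.exp (c * t) - 1) / c := by
  have := intervalIntegral.integral_comp_mul_left (a := 0) (b := t) Real.exp hc
  rw [this, integral_exp]
  simp [smul_eq_mul]
  ring

/-- Gronwall-type convolution lemma for sequences: if a sequence of
locally bounded nonnegative functions satisfies
u^{n+1}(t) ≤ g(t) + ∫_0^t h(t−s)u^n(s) ds on [0,T], then
sup_n sup_{t ≤ T} u^n(t) ≤ 2 e^{2bT} (sup_{t ≤ T} g(t) + sup_{t ≤ T} u^0(t)). -/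
theorem stmt7 (T : ℝ) (hT : 0 ≤ T) (h g : ℝ → ℝ) (u : ℕ → ℝ → ℝ)
    (hh_nonneg : ∀ t, 0 ≤ t → 0 ≤ h t)
    (hh_int : ∀ S, 0 ≤ S → IntervalIntegrable h volume 0 S)
    (hg_nonneg : ∀ t, 0 ≤ t → 0 ≤ g t)
    (hg_loc : ∀ S, 0 ≤ S → ∃ C, ∀ t ∈ Set.Icc (0:ℝ) S, g t ≤ C)
    (b : ℝ) (hb : 0 < b)
    (hsmall : ∫ s in (0:ℝ)..T, (if b ≤ h s then h s else 0) < 1 / 2)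
    (hu_nonneg : ∀ n t, 0 ≤ t → 0 ≤ u n t)
    (hu_loc : ∀ n S, 0 ≤ S → ∃ C, ∀ t ∈ Set.Icc (0:ℝ) S, u n t ≤ C)
    (hu : ∀ n, ∀ t ∈ Set.Icc (0:ℝ) T,
      u (n + 1) t ≤ g t + ∫ s in (0:ℝ)..t, h (t - s) * u n s) :
    ∀ n, ∀ t ∈ Set.Icc (0:ℝ) T,
      u n t ≤ 2 * Real.exp (2 * b * T) *
        (sSup (g '' Set.Icc 0 T) + sSup (u 0 '' Set.Icc 0 T)) := by
  set Cg := sSup (g '' Set.Icc 0 T) with hCg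
  set Cu := sSup (u 0 '' Set.Icc 0 T) with hCu
  set big : ℝ → ℝ := fun s => if b ≤ h s then h s else 0 with hbigdef
  -- bounds via sSup
  have hbddg : BddAbove (g '' Set.Icc 0 T) := by
    obtain ⟨C, hC⟩ := hg_loc T hT
    exact ⟨C, by rw [mem_upperBounds]; rintro x ⟨t, ht, rfl⟩; exact hC t ht⟩
  have hbddu : BddAbove (u 0 '' Set.Icc 0 T) := by
    obtain ⟨C, hC⟩ := hu_loc 0 T hT
    exact ⟨C, by rw [mem_upperBounds]; rintro x ⟨t, ht, rfl⟩; exact hC t ht⟩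
  have hgle : ∀ t ∈ Set.Icc (0:ℝ) T, g t ≤ Cg :=
    fun t ht => le_csSup hbddg (Set.mem_image_of_mem _ ht)
  have hule : ∀ t ∈ Set.Icc (0:ℝ) T, u 0 t ≤ Cu :=
    fun t ht => le_csSup hbddu (Set.mem_image_of_mem _ ht)
  have hCg0 : 0 ≤ Cg := le_trans (hg_nonneg 0 le_rfl) (hgle 0 ⟨le_rfl, hT⟩)
  have hCu0 : 0 ≤ Cu := le_trans (hu_nonneg 0 0 le_rfl) (hule 0 ⟨le_rfl, hT⟩)
  set D := 2 * (Cg + Cu) with hD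
  have hD0 : 0 ≤ D := by positivity
  -- properties of big
  have hbig_nonneg : ∀ s, 0 ≤ s → 0 ≤ big s := by
    intro s hs
    simp only [hbigdef]
    split
    · exact hh_nonneg s hs
    · exact le_rfl
  have hbig_int : ∀ S, 0 ≤ S → IntervalIntegrable big volume 0 S := by
    intro S hS
    apply (hh_int S hS).mono_fun
    · have hmeas : Measurable (fun x : ℝ => if b ≤ x then x else 0) := by
        exact Measurable.ite (measurableSet_le measurable_const measurable_id)
          measurable_id measurable_const
      have hae : AEMeasurable h (volume.restrict (Set.uIoc 0 S)) := by
        have := (hh_int S hS).aestronglyMeasurable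
        rw [Set.uIoc_of_le hS]
        exact this.aemeasurable
      exact (hmeas.comp_aemeasurable hae).aestronglyMeasurable
    · filter_upwards with x
      simp only [hbigdef, Real.norm_eq_abs]
      split
      · exact le_rfl
      · simp [abs_nonneg]
  have hbig_le : ∀ x, h x ≤ big x + b := by
    intro x
    simp only [hbigdef]
    split
    · linarith
    · linarith [not_le.mp (by assumption)]
  -- the main inductive claim
  have main : ∀ n, ∀ t ∈ Set.Icc (0:ℝ) T, u n t ≤ D * Real.exp (2 * b * t) := by
    intro n
    induction n with
    | zero =>
      intro t ht
      have h1 : (1:ℝ) ≤ Real.exp (2 * b * t) :=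
        Real.one_le_exp (by nlinarith [ht.1, hb.le])
      nlinarith [hule t ht, hCg0]
    | succ n IH =>
      intro t ht
      obtain ⟨ht0, htT⟩ := ht
      -- integrability facts
      have hcont : ContinuousOn (fun s : ℝ => D * Real.exp (2 * b * s)) (Set.uIcc 0 t) :=
        (continuous_const.mul (Real.continuous_exp.comp (continuous_const.mul continuous_id))).continuousOn
      have hht : IntervalIntegrable (fun s => h (t - s)) volume 0 t := by
        have := (hh_int t ht0).comp_sub_left t
        simpa using this.symm
      have hbigt : IntervalIntegrable (fun s => big (t - s)) volume 0 t := by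
        have := (hbig_int t ht0).comp_sub_left t
        simpa using this.symm
      have hG1int : IntervalIntegrable (fun s => h (t - s) * (D * Real.exp (2 * b * s))) volume 0 t :=
        hht.mul_continuousOn hcont
      have hAint : IntervalIntegrable (fun s => big (t - s) * (D * Real.exp (2 * b * s))) volume 0 t :=
        hbigt.mul_continuousOn hcont
      have hBint : IntervalIntegrable (fun s => b * (D * Real.exp (2 * b * s))) volume 0 t :=
        (continuous_const.mul (continuous_const.mul
          (Real.continuous_exp.comp (continuous_const.mul continuous_id)))).intervalIntegrable 0 t
      have hG2int : IntervalIntegrable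
          (fun s => big (t - s) * (D * Real.exp (2 * b * s)) + b * (D * Real.exp (2 * b * s)))
          volume 0 t := hAint.add hBint
      -- step 1: compare with the dominating integrand
      have step1 : (∫ s in (0:ℝ)..t, h (t - s) * u n s)
          ≤ ∫ s in (0:ℝ)..t, h (t - s) * (D * Real.exp (2 * b * s)) := by
        by_cases hFint : IntervalIntegrable (fun s => h (t - s) * u n s) volume 0 t
        · apply intervalIntegral.integral_mono_on ht0 hFint hG1int
          intro s hs
          have hs0 : 0 ≤ s := hs.1
          have hst : s ≤ t := hs.2
          exact mul_le_mul_of_nonneg_left (IH s ⟨hs0, hst.trans htT⟩)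
            (hh_nonneg _ (by linarith))
        · rw [intervalIntegral.integral_undef hFint]
          apply intervalIntegral.integral_nonneg ht0
          intro s hs
          exact mul_nonneg (hh_nonneg _ (by linarith [hs.2]))
            (mul_nonneg hD0 (Real.exp_pos _).le)
      -- step 2: split the kernel
      have step2 : (∫ s in (0:ℝ)..t, h (t - s) * (D * Real.exp (2 * b * s)))
          ≤ ∫ s in (0:ℝ)..t, (big (t - s) * (D * Real.exp (2 * b * s))
              + b * (D * Real.exp (2 * b * s))) := by
        apply intervalIntegral.integral_mono_on ht0 hG1int hG2int
        intro s hs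
        have := hbig_le (t - s)
        nlinarith [mul_nonneg hD0 (Real.exp_pos (2 * b * s)).le]
      -- step 3: big part bound
      have hbig_small : (∫ s in (0:ℝ)..t, big s) ≤ 1 / 2 := by
        have hsplit : (∫ s in (0:ℝ)..T, big s)
            = (∫ s in (0:ℝ)..t, big s) + ∫ s in t..T, big s := by
          rw [intervalIntegral.integral_add_adjacent_intervals
            (hbig_int t ht0) ((hbig_int T hT).mono_set' (by
              rw [Set.uIoc_of_le htT, Set.uIoc_of_le hT]
              exact Set.Ioc_subset_Ioc ht0 le_rfl))]
        have htail : 0 ≤ ∫ s in t..T, big s := by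
          apply intervalIntegral.integral_nonneg htT
          intro s hs
          exact hbig_nonneg s (le_trans ht0 hs.1)
        have := hsmall
        rw [hsplit] at this
        linarith
      have step3 : (∫ s in (0:ℝ)..t, big (t - s) * (D * Real.exp (2 * b * s)))
          ≤ D * Real.exp (2 * b * t) * (1 / 2) := by
        have mono : (∫ s in (0:ℝ)..t, big (t - s) * (D * Real.exp (2 * b * s)))
            ≤ ∫ s in (0:ℝ)..t, big (t - s) * (D * Real.exp (2 * b * t)) := by
          apply intervalIntegral.integral_mono_on ht0 hAint
            (hbigt.mul_continuousOn continuousOn_const)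
          intro s hs
          apply mul_le_mul_of_nonneg_left _ (hbig_nonneg _ (by linarith [hs.2]))
          exact mul_le_mul_of_nonneg_left
            (Real.exp_le_exp.mpr (by nlinarith [hs.2, hb.le])) hD0
        have heq : (∫ s in (0:ℝ)..t, big (t - s) * (D * Real.exp (2 * b * t)))
            = (∫ s in (0:ℝ)..t, big s) * (D * Real.exp (2 * b * t)) := by
          rw [intervalIntegral.integral_mul_const]
          congr 1
          have := intervalIntegral.integral_comp_sub_left (a := (0:ℝ)) (b := t) big t
          simpa using this
        rw [heq] at mono
        calc (∫ s in (0:ℝ)..t, big (t - s) * (D * Real.exp (2 * b * s)))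
            ≤ (∫ s in (0:ℝ)..t, big s) * (D * Real.exp (2 * b * t)) := mono
          _ ≤ (1 / 2) * (D * Real.exp (2 * b * t)) := by
              apply mul_le_mul_of_nonneg_right hbig_small
                (mul_nonneg hD0 (Real.exp_pos _).le)
          _ = D * Real.exp (2 * b * t) * (1 / 2) := by ring
      -- step 4: small part computation
      have step4 : (∫ s in (0:ℝ)..t, b * (D * Real.exp (2 * b * s)))
          = D * (Real.exp (2 * b * t) - 1) / 2 := by
        rw [intervalIntegral.integral_const_mul]
        rw [intervalIntegral.integral_const_mul]
        rw [exp_int (2 * b) t (by positivity)]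
        field_simp
      -- combine
      have hint := hu n t ⟨ht0, htT⟩
      have hadd : (∫ s in (0:ℝ)..t, (big (t - s) * (D * Real.exp (2 * b * s))
              + b * (D * Real.exp (2 * b * s))))
          = (∫ s in (0:ℝ)..t, big (t - s) * (D * Real.exp (2 * b * s)))
            + ∫ s in (0:ℝ)..t, b * (D * Real.exp (2 * b * s)) :=
        intervalIntegral.integral_add hAint hBint
      have hgt : g t ≤ Cg := hgle t ⟨ht0, htT⟩
      have hexp1 : (1:ℝ) ≤ Real.exp (2 * b * t) :=
        Real.one_le_exp (by nlinarith [hb.le])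
      calc u (n + 1) t ≤ g t + ∫ s in (0:ℝ)..t, h (t - s) * u n s := hint
        _ ≤ Cg + (D * Real.exp (2 * b * t) * (1 / 2) + D * (Real.exp (2 * b * t) - 1) / 2) := by
            rw [hadd] at step2
            linarith [step1, step2, step3, step4.le, step4.ge]
        _ ≤ D * Real.exp (2 * b * t) := by
            simp only [hD]
            nlinarith [hCu0, hCg0]
    -- end induction
  -- conclude
  intro n t ht
  have := main n t ht
  have hexp : Real.exp (2 * b * t) ≤ Real.exp (2 * b * T) :=
    Real.exp_le_exp.mpr (by nlinarith [ht.2, hb.le])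
  calc u n t ≤ D * Real.exp (2 * b * t) := this
    _ ≤ D * Real.exp (2 * b * T) := mul_le_mul_of_nonneg_left hexp hD0
    _ = 2 * Real.exp (2 * b * T) * (Cg + Cu) := by rw [hD]; ring
end

section
/- Let T ≥ 0, let h : [0,∞) → [0,∞) be locally integrable, and suppose b > 0 satisfies ∫_0^T h(s)·1{h(s) ≥ b} ds < 1/2. Let (u^n)_{n≥0} be a sequence of locally bounded nonnegative functions on [0,∞) satisfying u^{n+1}(t) ≤ ∫_0^t h(t−s) u^n(s) ds for all t ∈ [0,T] and all n ≥ 0. Then the series ∑_{n≥0} u^n converges uniformly on [0,T]. -/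
open MeasureTheory Real Filter

/-- Gronwall-type convolution lemma, summability of Picard iteration
errors: if a sequence of locally bounded nonnegative functions satisfies
u^{n+1}(t) ≤ ∫_0^t h(t−s)u^n(s) ds on [0,T], where h is nonnegative locally
integrable with ∫_0^T h·1{h ≥ b} < 1/2 for some b > 0, then the series ∑ u^n
converges uniformly on [0,T]. -/
theorem stmt8 (T : ℝ) (hT : 0 ≤ T) (h : ℝ → ℝ) (u : ℕ → ℝ → ℝ)
    (hh_nonneg : ∀ t, 0 ≤ t → 0 ≤ h t)
    (hh_int : ∀ S, 0 ≤ S → IntervalIntegrable h volume 0 S)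
    (b : ℝ) (hb : 0 < b)
    (hsmall : ∫ s in (0:ℝ)..T, (if b ≤ h s then h s else 0) < 1 / 2)
    (hu_nonneg : ∀ n t, 0 ≤ t → 0 ≤ u n t)
    (hu_loc : ∀ n S, 0 ≤ S → ∃ C, ∀ t ∈ Set.Icc (0:ℝ) S, u n t ≤ C)
    (hu : ∀ n, ∀ t ∈ Set.Icc (0:ℝ) T,
      u (n + 1) t ≤ ∫ s in (0:ℝ)..t, h (t - s) * u n s) :
    ∃ S : ℝ → ℝ, TendstoUniformlyOn
      (fun N t => ∑ n ∈ Finset.range N, u n t) S atTop (Set.Icc 0 T) := by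
  set g : ℝ → ℝ := fun s => if b ≤ h s then h s else 0 with hg_def
  have hg_nonneg : ∀ s, 0 ≤ g s := by
    intro s
    simp only [hg_def]
    split
    · exact hb.le.trans ‹_›
    · exact le_refl 0
  have hT_int : IntervalIntegrable h volume 0 T := hh_int T hT
  have hhT : IntegrableOn h (Set.Ioc 0 T) volume := hT_int.1
  -- g is integrable on (0, T]
  have hg_intT : IntegrableOn g (Set.Ioc 0 T) volume := by
    have hmeas : AEStronglyMeasurable h (volume.restrict (Set.Ioc 0 T)) :=
      hhT.aestronglyMeasurable
    have hm' : Measurable (hmeas.mk h) := hmeas.stronglyMeasurable_mk.measurable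
    have hgmeas : AEStronglyMeasurable g (volume.restrict (Set.Ioc 0 T)) := by
      refine AEStronglyMeasurable.congr
        (f := fun s => if b ≤ hmeas.mk h s then hmeas.mk h s else 0) ?_ ?_
      · exact (Measurable.ite (measurableSet_le measurable_const hm') hm'
          measurable_const).aestronglyMeasurable
      · filter_upwards [hmeas.ae_eq_mk] with s hs
        simp [hg_def, hs]
    refine Integrable.mono hhT hgmeas (ae_of_all _ fun s => ?_)
    simp only [hg_def]
    split
    · exact le_refl _
    · simpa using abs_nonneg (h s)
  set ε : ℝ := ∫ s in (0:ℝ)..T, g s with hε_def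
  have hε_lt : ε < 1 / 2 := hsmall
  have hε_nonneg : 0 ≤ ε :=
    intervalIntegral.integral_nonneg hT fun s _ => hg_nonneg s
  set ρ : ℝ := ε + 1 / 2 with hρ_def
  have hρ0 : 0 ≤ ρ := by positivity
  have hρ1 : ρ < 1 := by simp only [hρ_def]; linarith
  -- the key estimate on the exponentially weighted integral of h
  have hkey : ∀ t ∈ Set.Icc (0:ℝ) T, ∫ r in (0:ℝ)..t, h r * exp (-(2 * b) * r) ≤ ρ := by
    rintro t ⟨ht0, htT⟩
    have hcont : Continuous fun r : ℝ => exp (-(2 * b) * r) :=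
      Real.continuous_exp.comp (continuous_const.mul continuous_id)
    have hfi : IntervalIntegrable (fun r => h r * exp (-(2 * b) * r)) volume 0 t :=
      (hh_int t ht0).mul_continuousOn hcont.continuousOn
    have hbi : IntegrableOn (fun r => b * exp (-(2 * b) * r)) (Set.Ioc 0 t) volume :=
      (continuous_const.mul hcont).integrableOn_Ioc
    have hgi : IntegrableOn g (Set.Ioc 0 t) volume :=
      hg_intT.mono_set (Set.Ioc_subset_Ioc_right htT)
    rw [intervalIntegral.integral_of_le ht0]
    have step1 : ∫ r in Set.Ioc 0 t, h r * exp (-(2 * b) * r) ≤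
        ∫ r in Set.Ioc 0 t, (g r + b * exp (-(2 * b) * r)) := by
      refine setIntegral_mono_on (hfi.1) (hgi.add hbi) measurableSet_Ioc ?_
      intro r hr
      have hr0 : 0 ≤ r := hr.1.le
      have hh0 : 0 ≤ h r := hh_nonneg r hr0
      have hexp1 : exp (-(2 * b) * r) ≤ 1 := by
        apply exp_le_one_iff.mpr; nlinarith
      have hexp0 : 0 < exp (-(2 * b) * r) := exp_pos _
      simp only [hg_def]
      split_ifs with hc
      · have h1 : h r * exp (-(2 * b) * r) ≤ h r * 1 :=
          mul_le_mul_of_nonneg_left hexp1 hh0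
        have h2 : 0 < b * exp (-(2 * b) * r) := mul_pos hb hexp0
        nlinarith
      · push_neg at hc
        have h1 : h r * exp (-(2 * b) * r) ≤ b * exp (-(2 * b) * r) :=
          mul_le_mul_of_nonneg_right hc.le hexp0.le
        linarith
    have step2 : ∫ r in Set.Ioc 0 t, (g r + b * exp (-(2 * b) * r)) =
        (∫ r in Set.Ioc 0 t, g r) + ∫ r in Set.Ioc 0 t, b * exp (-(2 * b) * r) :=
      integral_add hgi hbi
    have step3 : ∫ r in Set.Ioc 0 t, g r ≤ ε := by
      rw [hε_def, intervalIntegral.integral_of_le hT]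
      exact setIntegral_mono_set hg_intT (ae_of_all _ hg_nonneg)
        ((Set.Ioc_subset_Ioc_right htT).eventuallyLE)
    have step4 : ∫ r in Set.Ioc 0 t, b * exp (-(2 * b) * r) ≤ 1 / 2 := by
      rw [← intervalIntegral.integral_of_le ht0]
      have hb2 : (-(2 * b)) ≠ 0 := neg_ne_zero.mpr (by positivity)
      have : ∫ r in (0:ℝ)..t, exp (-(2 * b) * r) =
          (-(2 * b))⁻¹ * (exp (-(2 * b) * t) - 1) := by
        rw [intervalIntegral.integral_comp_mul_left (fun x => exp x) hb2]
        simp [integral_exp]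
      rw [intervalIntegral.integral_const_mul, this]
      have hexp1 : exp (-(2 * b) * t) ≤ 1 := by
        apply exp_le_one_iff.mpr; nlinarith
      have hexp0 : 0 < exp (-(2 * b) * t) := exp_pos _
      have heq : b * ((-(2 * b))⁻¹ * (exp (-(2 * b) * t) - 1)) =
          (1 - exp (-(2 * b) * t)) / 2 := by
        field_simp
        ring
      rw [heq]
      linarith
    refine le_trans step1 ?_
    rw [step2, hρ_def]
    linarith
  -- a uniform bound on u 0
  obtain ⟨C0, hC0⟩ := hu_loc 0 T hT
  set C : ℝ := max C0 0 with hC_def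
  have hC0' : 0 ≤ C := le_max_right _ _
  -- the main induction
  have hind : ∀ n, ∀ t ∈ Set.Icc (0:ℝ) T, u n t ≤ C * ρ ^ n * exp (2 * b * t) := by
    intro n
    induction n with
    | zero =>
      rintro t ⟨ht0, htT⟩
      have h1 : u 0 t ≤ C := (hC0 t ⟨ht0, htT⟩).trans (le_max_left _ _)
      have h2 : (1:ℝ) ≤ exp (2 * b * t) := by
        apply one_le_exp; positivity
      calc u 0 t ≤ C := h1
        _ = C * 1 := by ring
        _ ≤ C * exp (2 * b * t) := by nlinarith
        _ = C * ρ ^ 0 * exp (2 * b * t) := by ring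
    | succ n ih =>
      rintro t ⟨ht0, htT⟩
      have hcont : Continuous fun s : ℝ => C * ρ ^ n * exp (2 * b * s) :=
        continuous_const.mul (Real.continuous_exp.comp (continuous_const.mul continuous_id))
      have hhts : IntervalIntegrable (fun s => h (t - s)) volume 0 t := by
        have := ((hh_int t ht0).comp_sub_left t).symm
        simpa using this
      have hRi : IntegrableOn (fun s => h (t - s) * (C * ρ ^ n * exp (2 * b * s)))
          (Set.Ioc 0 t) volume :=
        (hhts.mul_continuousOn hcont.continuousOn).1
      have step1 : u (n + 1) t ≤ ∫ s in (0:ℝ)..t, h (t - s) * u n s :=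
        hu n t ⟨ht0, htT⟩
      have step2 : ∫ s in (0:ℝ)..t, h (t - s) * u n s ≤
          ∫ s in (0:ℝ)..t, h (t - s) * (C * ρ ^ n * exp (2 * b * s)) := by
        rw [intervalIntegral.integral_of_le ht0, intervalIntegral.integral_of_le ht0]
        refine integral_mono_of_nonneg ?_ hRi ?_
        · filter_upwards [ae_restrict_mem measurableSet_Ioc] with s hs
          exact mul_nonneg (hh_nonneg _ (by linarith [hs.2])) (hu_nonneg n s hs.1.le)
        · filter_upwards [ae_restrict_mem measurableSet_Ioc] with s hs
          exact mul_le_mul_of_nonneg_left (ih s ⟨hs.1.le, hs.2.trans htT⟩)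
            (hh_nonneg _ (by linarith [hs.2]))
      have step3 : ∫ s in (0:ℝ)..t, h (t - s) * (C * ρ ^ n * exp (2 * b * s)) =
          (C * ρ ^ n * exp (2 * b * t)) *
            ∫ r in (0:ℝ)..t, h r * exp (-(2 * b) * r) := by
        have hcongr : ∀ s : ℝ, h (t - s) * (C * ρ ^ n * exp (2 * b * s)) =
            (C * ρ ^ n * exp (2 * b * t)) *
              ((fun r => h r * exp (-(2 * b) * r)) (t - s)) := by
          intro s
          have hexp : exp (2 * b * t) * exp (-(2 * b) * (t - s)) = exp (2 * b * s) := by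
            rw [← exp_add]
            ring_nf
          simp only
          rw [← hexp]
          ring
        calc ∫ s in (0:ℝ)..t, h (t - s) * (C * ρ ^ n * exp (2 * b * s))
            = ∫ s in (0:ℝ)..t, (C * ρ ^ n * exp (2 * b * t)) *
                ((fun r => h r * exp (-(2 * b) * r)) (t - s)) := by
              exact intervalIntegral.integral_congr fun s _ => hcongr s
          _ = (C * ρ ^ n * exp (2 * b * t)) *
                ∫ s in (0:ℝ)..t, (fun r => h r * exp (-(2 * b) * r)) (t - s) :=
              intervalIntegral.integral_const_mul _ _
          _ = (C * ρ ^ n * exp (2 * b * t)) *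
                ∫ r in (0:ℝ)..t, h r * exp (-(2 * b) * r) := by
              rw [intervalIntegral.integral_comp_sub_left
                (fun r => h r * exp (-(2 * b) * r)) t]
              simp
      have step4 : (C * ρ ^ n * exp (2 * b * t)) *
          (∫ r in (0:ℝ)..t, h r * exp (-(2 * b) * r)) ≤
          (C * ρ ^ n * exp (2 * b * t)) * ρ :=
        mul_le_mul_of_nonneg_left (hkey t ⟨ht0, htT⟩) (by positivity)
      calc u (n + 1) t ≤ ∫ s in (0:ℝ)..t, h (t - s) * u n s := step1
        _ ≤ ∫ s in (0:ℝ)..t, h (t - s) * (C * ρ ^ n * exp (2 * b * s)) := step2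
        _ = (C * ρ ^ n * exp (2 * b * t)) *
            ∫ r in (0:ℝ)..t, h r * exp (-(2 * b) * r) := step3
        _ ≤ (C * ρ ^ n * exp (2 * b * t)) * ρ := step4
        _ = C * ρ ^ (n + 1) * exp (2 * b * t) := by ring
  -- conclude by the Weierstrass M-test
  refine ⟨fun t => ∑' n, u n t,
    tendstoUniformlyOn_tsum_nat (u := fun n => (C * exp (2 * b * T)) * ρ ^ n) ?_ ?_⟩
  · exact (summable_geometric_of_lt_one hρ0 hρ1).mul_left _
  · rintro n t ⟨ht0, htT⟩
    rw [Real.norm_eq_abs, abs_of_nonneg (hu_nonneg n t ht0)]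
    calc u n t ≤ C * ρ ^ n * exp (2 * b * t) := hind n t ⟨ht0, htT⟩
      _ ≤ C * ρ ^ n * exp (2 * b * T) := by
          have : exp (2 * b * t) ≤ exp (2 * b * T) := by
            apply exp_le_exp.mpr; nlinarith
          have hCρ : 0 ≤ C * ρ ^ n := by positivity
          nlinarith
      _ = (C * exp (2 * b * T)) * ρ ^ n := by ring
end
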